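/- arXiv:2003.04554 — 6 statements merged into one kernel-verified Lean document; each statement's English description precedes it below -/
import Mathlib

section
/- Let 1 ≤ p < ∞, let X be a complex Banach space, let N ∈ ℕ, let x_1,…,x_N ∈ X, and let a_1,…,a_N, b_1,…,b_N ∈ ℂ satisfy |a_j| ≤ |b_j| for all j = 1,…,N. Then (∑_{ε∈{−1,1}^N} ‖∑_{j=1}^N ε_j a_j x_j‖_X^p)^{1/p} ≤ 2 · (∑_{ε∈{−1,1}^N} ‖∑_{j=1}^N ε_j b_j x_j‖_X^p)^{1/p}. (Kahane's contraction principle, in the discrete sign formulation.) -/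
open scoped BigOperators
open Finset

section Aux

variable {X : Type*} [NormedAddCommGroup X] [NormedSpace ℝ X] {p : ℝ}

private lemma psi_add_le (hp : 1 ≤ p) {N : ℕ} (f g : (Fin N → Bool) → X) :
    (∑ ε : Fin N → Bool, ‖f ε + g ε‖ ^ p) ^ (1 / p)
      ≤ (∑ ε : Fin N → Bool, ‖f ε‖ ^ p) ^ (1 / p)
        + (∑ ε : Fin N → Bool, ‖g ε‖ ^ p) ^ (1 / p) := by
  have hp0 : (0:ℝ) < p := lt_of_lt_of_le one_pos hp
  refine le_trans ?_ (Real.Lp_add_le_of_nonneg _ hp (fun i _ => norm_nonneg _)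
    (fun i _ => norm_nonneg _))
  refine Real.rpow_le_rpow (by positivity) ?_ (by positivity)
  refine Finset.sum_le_sum fun ε _ => ?_
  exact Real.rpow_le_rpow (norm_nonneg _) (norm_add_le _ _) hp0.le

private lemma psi_smul (hp : 1 ≤ p) {N : ℕ} (c : ℝ) (hc : 0 ≤ c) (f : (Fin N → Bool) → X) :
    (∑ ε : Fin N → Bool, ‖c • f ε‖ ^ p) ^ (1 / p)
      = c * (∑ ε : Fin N → Bool, ‖f ε‖ ^ p) ^ (1 / p) := by
  have hp0 : p ≠ 0 := by linarith
  have h1 : ∀ ε : Fin N → Bool, ‖c • f ε‖ ^ p = c ^ p * ‖f ε‖ ^ p := by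
    intro ε
    rw [norm_smul, Real.norm_of_nonneg hc, Real.mul_rpow hc (norm_nonneg _)]
  simp_rw [h1, ← Finset.mul_sum]
  rw [Real.mul_rpow (Real.rpow_nonneg hc p) (by positivity), ← Real.rpow_mul hc,
    mul_one_div, div_self hp0, Real.rpow_one]

private def sg {N : ℕ} (ε : Fin N → Bool) (j : Fin N) : ℝ := if ε j then 1 else -1

private noncomputable def Phi (p : ℝ) {N : ℕ} (y : Fin N → X) (t : Fin N → ℝ) : ℝ :=
  (∑ ε : Fin N → Bool, ‖∑ j, sg ε j • (t j • y j)‖ ^ p) ^ (1 / p)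

private lemma Phi_nonneg {N : ℕ} (y : Fin N → X) (t : Fin N → ℝ) : 0 ≤ Phi p y t :=
  Real.rpow_nonneg (Finset.sum_nonneg fun ε _ => Real.rpow_nonneg (norm_nonneg _) _) _

private def flipP (N : ℕ) (k : Fin N) : Equiv.Perm (Fin N → Bool) :=
  Function.Involutive.toPerm (fun ε => Function.update ε k (!(ε k))) (by
    intro ε
    funext j
    rcases eq_or_ne j k with rfl | h
    · simp
    · simp [Function.update_of_ne h])

private lemma phi_step (hp : 1 ≤ p) {N : ℕ} (y : Fin N → X) (t : Fin N → ℝ)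
    (k : Fin N) (hk : |t k| ≤ 1) :
    Phi p y t ≤ Phi p y (Function.update t k 1) := by
  obtain ⟨hk1, hk2⟩ := abs_le.mp hk
  set u := Function.update t k 1 with hu
  set v := Function.update t k (-1) with hvdef
  have hc1 : (0:ℝ) ≤ (1 + t k)/2 := by linarith
  have hc2 : (0:ℝ) ≤ (1 - t k)/2 := by linarith
  have hdec : ∀ ε : Fin N → Bool,
      (∑ j, sg ε j • (t j • y j))
        = ((1 + t k)/2) • (∑ j, sg ε j • (u j • y j))
          + ((1 - t k)/2) • (∑ j, sg ε j • (v j • y j)) := by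
    intro ε
    rw [Finset.smul_sum, Finset.smul_sum, ← Finset.sum_add_distrib]
    refine Finset.sum_congr rfl fun j _ => ?_
    rcases eq_or_ne j k with rfl | h
    · simp only [hu, hvdef, Function.update_self]
      module
    · simp only [hu, hvdef, Function.update_of_ne h]
      module
  have hv : Phi p y v = Phi p y u := by
    unfold Phi
    congr 1
    rw [← Equiv.sum_comp (flipP N k) (fun ε => ‖∑ j, sg ε j • (v j • y j)‖ ^ p)]
    refine Finset.sum_congr rfl fun ε _ => ?_
    congr 2
    refine Finset.sum_congr rfl fun j _ => ?_
    rcases eq_or_ne j k with rfl | h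
    · simp only [flipP, Function.Involutive.coe_toPerm, sg, hu, hvdef,
        Function.update_self, Function.Involutive.toPerm, Equiv.coe_fn_mk]
      cases hb : ε j <;> simp
    · simp only [flipP, Function.Involutive.coe_toPerm, sg, hu, hvdef,
        Function.update_of_ne h, Function.Involutive.toPerm, Equiv.coe_fn_mk]
  have h1 : Phi p y t
      ≤ (∑ ε : Fin N → Bool, ‖((1 + t k)/2) • (∑ j, sg ε j • (u j • y j))‖ ^ p) ^ (1/p)
        + (∑ ε : Fin N → Bool, ‖((1 - t k)/2) • (∑ j, sg ε j • (v j • y j))‖ ^ p) ^ (1/p) := by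
    unfold Phi
    simp_rw [hdec]
    exact psi_add_le hp _ _
  rw [psi_smul hp _ hc1, psi_smul hp _ hc2] at h1
  have h2 : (∑ ε : Fin N → Bool, ‖∑ j, sg ε j • (v j • y j)‖ ^ p) ^ (1/p) = Phi p y u := hv
  rw [h2] at h1
  have h3 : (∑ ε : Fin N → Bool, ‖∑ j, sg ε j • (u j • y j)‖ ^ p) ^ (1/p) = Phi p y u := rfl
  rw [h3] at h1
  calc Phi p y t ≤ (1 + t k)/2 * Phi p y u + (1 - t k)/2 * Phi p y u := h1
    _ = Phi p y u := by ring

private lemma phi_le (hp : 1 ≤ p) {N : ℕ} (y : Fin N → X) (t : Fin N → ℝ)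
    (ht : ∀ j, |t j| ≤ 1) : Phi p y t ≤ Phi p y (fun _ => 1) := by
  have key : ∀ s : Finset (Fin N),
      Phi p y t ≤ Phi p y (fun j => if j ∈ s then 1 else t j) := by
    intro s
    induction s using Finset.induction_on with
    | empty => simp
    | insert _ _ hks ih =>
      rename_i k s
      refine le_trans ih ?_
      have hbd : |(fun j => if j ∈ s then 1 else t j) k| ≤ 1 := by
        by_cases hks' : k ∈ s <;> simp [hks', ht k]
      have step := phi_step hp y (fun j => if j ∈ s then 1 else t j) k hbd
      have heq : Function.update (fun j => if j ∈ s then 1 else t j) k 1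
          = (fun j => if j ∈ insert k s then 1 else t j) := by
        funext j
        rcases eq_or_ne j k with rfl | h
        · simp
        · simp [Function.update_of_ne h, Finset.mem_insert, h]
      rwa [heq] at step
  have h := key Finset.univ
  simpa using h

end Aux

/-- **Kahane's contraction principle** (discrete sign formulation).
If `|a j| ≤ |b j|` for all `j`, then the `p`-th moment (over all sign vectors
`ε ∈ {−1,1}^N`) of `‖∑ j ε_j a_j x_j‖` is bounded by twice that of
`‖∑ j ε_j b_j x_j‖`. -/
theorem kahane_contraction_principle
    {X : Type*} [NormedAddCommGroup X] [NormedSpace ℂ X] [CompleteSpace X]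
    (p : ℝ) (hp : 1 ≤ p) (N : ℕ) (x : Fin N → X) (a b : Fin N → ℂ)
    (hab : ∀ j, ‖a j‖ ≤ ‖b j‖) :
    (∑ ε : Fin N → Bool,
        ‖∑ j, (if ε j then a j • x j else -(a j • x j))‖ ^ p) ^ (1 / p)
      ≤ 2 * (∑ ε : Fin N → Bool,
        ‖∑ j, (if ε j then b j • x j else -(b j • x j))‖ ^ p) ^ (1 / p) := by
  set y : Fin N → X := fun j => b j • x j with hy
  set lam : Fin N → ℂ := fun j => if b j = 0 then 0 else a j / b j with hlamdef
  have hcoef : ∀ j, a j • x j = lam j • y j := by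
    intro j
    simp only [hy]
    by_cases hb : b j = 0
    · have ha0 : ‖a j‖ = 0 :=
        le_antisymm (by simpa [hb] using hab j) (norm_nonneg _)
      have ha : a j = 0 := by simpa using ha0
      simp [hlamdef, hb, ha]
    · simp only [hlamdef, hb, if_false, smul_smul, div_mul_cancel₀ _ hb]
  have hlam : ∀ j, ‖lam j‖ ≤ 1 := by
    intro j
    by_cases hb : b j = 0
    · simp [hlamdef, hb]
    · simp only [hlamdef, hb, if_false, norm_div]
      rw [div_le_one (norm_pos_iff.mpr hb)]
      exact hab j
  have hterm : ∀ (ε : Fin N → Bool) (j : Fin N),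
      (if ε j then a j • x j else -(a j • x j))
        = sg ε j • ((lam j).re • y j) + sg ε j • ((lam j).im • (Complex.I • y j)) := by
    intro ε j
    have h1 : a j • x j = (lam j).re • y j + (lam j).im • (Complex.I • y j) := by
      rw [hcoef j]
      nth_rewrite 1 [← Complex.re_add_im (lam j)]
      rw [add_smul, mul_smul, Complex.coe_smul, Complex.coe_smul]
    cases h : ε j
    · simp only [sg, h, Bool.false_eq_true, if_false, h1, neg_add, neg_smul, one_smul]
    · simp [sg, h, h1]
  have hsplit : ∀ ε : Fin N → Bool,
      (∑ j, (if ε j then a j • x j else -(a j • x j)))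
        = (∑ j, sg ε j • ((lam j).re • y j))
          + (∑ j, sg ε j • ((lam j).im • (Complex.I • y j))) := by
    intro ε
    rw [← Finset.sum_add_distrib]
    exact Finset.sum_congr rfl fun j _ => hterm ε j
  have hre : ∀ j, |(lam j).re| ≤ 1 := fun j => (Complex.abs_re_le_norm _).trans (hlam j)
  have him : ∀ j, |(lam j).im| ≤ 1 := fun j => (Complex.abs_im_le_norm _).trans (hlam j)
  have hF : Phi p y (fun j => (lam j).re) ≤ Phi p y (fun _ => 1) := phi_le hp y _ hre
  have hG : Phi p (fun j => Complex.I • y j) (fun j => (lam j).im)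
      ≤ Phi p (fun j => Complex.I • y j) (fun _ => 1) := phi_le hp _ _ him
  have hGI : Phi p (fun j => Complex.I • y j) (fun _ => (1:ℝ)) = Phi p y (fun _ => 1) := by
    unfold Phi
    congr 1
    refine Finset.sum_congr rfl fun ε _ => ?_
    congr 1
    have : (∑ j, sg ε j • ((1:ℝ) • (Complex.I • y j)))
        = Complex.I • (∑ j, sg ε j • ((1:ℝ) • y j)) := by
      rw [Finset.smul_sum]
      refine Finset.sum_congr rfl fun j _ => ?_
      simp only [one_smul]
      exact smul_comm _ _ _
    rw [this, norm_smul, Complex.norm_I, one_mul]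
  have hmain : (∑ ε : Fin N → Bool,
        ‖∑ j, (if ε j then a j • x j else -(a j • x j))‖ ^ p) ^ (1 / p)
      ≤ Phi p y (fun j => (lam j).re)
        + Phi p (fun j => Complex.I • y j) (fun j => (lam j).im) := by
    simp_rw [hsplit]
    exact psi_add_le hp _ _
  have hRHS : (∑ ε : Fin N → Bool,
        ‖∑ j, (if ε j then b j • x j else -(b j • x j))‖ ^ p) ^ (1 / p)
      = Phi p y (fun _ => 1) := by
    unfold Phi
    congr 1
    refine Finset.sum_congr rfl fun ε _ => ?_
    congr 2
    refine Finset.sum_congr rfl fun j _ => ?_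
    rcases Bool.eq_false_or_eq_true (ε j) with h | h <;> simp [sg, h, hy]
  rw [hRHS, two_mul]
  calc (∑ ε : Fin N → Bool,
        ‖∑ j, (if ε j then a j • x j else -(a j • x j))‖ ^ p) ^ (1 / p)
      ≤ Phi p y (fun j => (lam j).re)
        + Phi p (fun j => Complex.I • y j) (fun j => (lam j).im) := hmain
    _ ≤ Phi p y (fun _ => 1) + Phi p y (fun _ => 1) := by
        refine add_le_add hF (le_trans hG ?_)
        rw [hGI]
end

section
/- Let X and Y be complex Banach spaces, p ∈ [1,∞), and let 𝒯 be an R_p-bounded family of bounded linear operators from X to Y with bound C. Then the closure of the convex hull of 𝒯 in the strong operator topology is again R_p-bounded with bound at most C. Here the strong-operator closure of conv 𝒯 consists of all bounded linear operators S : X → Y such that for every finite set x_1,…,x_N ∈ X and every ε > 0 there exist n ∈ ℕ, operators T_1,…,T_n ∈ 𝒯 and λ_1,…,λ_n ∈ [0,1] with ∑_{k=1}^n λ_k = 1 and ‖S x_j − ∑_{k=1}^n λ_k T_k x_j‖_Y < ε for all j = 1,…,N. -/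
open scoped BigOperators

/-- Discrete sign formulation of `R_p`-boundedness of a family `𝒯 ⊆ L(X,Y)`
with bound `C`: for all `N`, all `T_1, …, T_N ∈ 𝒯` and `x_1, …, x_N ∈ X`,
`(∑_{ε ∈ {−1,1}^N} ‖∑ j ε_j T_j x_j‖^p)^{1/p} ≤ C (∑_{ε ∈ {−1,1}^N} ‖∑ j ε_j x_j‖^p)^{1/p}`. -/
def IsRpBoundedWith (p : ℝ) {X Y : Type*} [NormedAddCommGroup X] [NormedSpace ℂ X]
    [NormedAddCommGroup Y] [NormedSpace ℂ Y] (𝒯 : Set (X →L[ℂ] Y)) (C : ℝ) : Prop :=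
  ∀ (N : ℕ) (T : Fin N → X →L[ℂ] Y), (∀ j, T j ∈ 𝒯) → ∀ x : Fin N → X,
    (∑ ε : Fin N → Bool,
        ‖∑ j, (if ε j then T j (x j) else -(T j (x j)))‖ ^ p) ^ (1 / p)
      ≤ C * (∑ ε : Fin N → Bool,
        ‖∑ j, (if ε j then x j else -(x j))‖ ^ p) ^ (1 / p)

/-- The closure of the convex hull of a set of operators in the strong operator
topology: `S` belongs to it iff for every finite set of vectors and every
`ε > 0` there is a finite convex combination of members of `𝒯` that is
`ε`-close to `S` on these vectors. -/
def StrongClosureConvexHull {X Y : Type*} [NormedAddCommGroup X] [NormedSpace ℂ X]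
    [NormedAddCommGroup Y] [NormedSpace ℂ Y] (𝒯 : Set (X →L[ℂ] Y)) :
    Set (X →L[ℂ] Y) :=
  {S | ∀ (N : ℕ) (x : Fin N → X) (ε : ℝ), 0 < ε →
    ∃ (n : ℕ) (T : Fin n → X →L[ℂ] Y) (l : Fin n → ℝ),
      (∀ k, T k ∈ 𝒯) ∧ (∀ k, l k ∈ Set.Icc (0 : ℝ) 1) ∧ (∑ k, l k = 1) ∧
      ∀ j, ‖S (x j) - ∑ k, l k • T k (x j)‖ < ε}

/-- Auxiliary linear "sign pattern" map into a `PiLp` space. -/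
def signMapAux (p : ℝ) {Y : Type*} [NormedAddCommGroup Y] [NormedSpace ℝ Y] (N : ℕ) :
    (Fin N → Y) →ₗ[ℝ] PiLp (ENNReal.ofReal p) (fun _ : Fin N → Bool => Y) where
  toFun y := (WithLp.equiv _ _).symm fun ε => ∑ j, (if ε j then (1:ℝ) else -1) • y j
  map_add' a b := by
    ext ε
    simp [smul_add, Finset.sum_add_distrib]
  map_smul' c a := by
    ext ε
    simp [Finset.smul_sum, smul_comm]

/-- The strong-operator closure of the convex hull of an `R_p`-bounded family
is `R_p`-bounded with the same bound. -/
theorem isRpBoundedWith_strongClosure_convexHull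
    {X Y : Type*} [NormedAddCommGroup X] [NormedSpace ℂ X] [CompleteSpace X]
    [NormedAddCommGroup Y] [NormedSpace ℂ Y] [CompleteSpace Y]
    (p : ℝ) (hp : 1 ≤ p) (𝒯 : Set (X →L[ℂ] Y)) (C : ℝ)
    (h : IsRpBoundedWith p 𝒯 C) :
    IsRpBoundedWith p (StrongClosureConvexHull 𝒯) C := by
  intro N S hS x
  have hp0 : (0:ℝ) < p := lt_of_lt_of_le one_pos hp
  haveI : Fact (1 ≤ ENNReal.ofReal p) := ⟨ENNReal.one_le_ofReal.mpr hp⟩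
  have hqt : (ENNReal.ofReal p).toReal = p := ENNReal.toReal_ofReal hp0.le
  set Φ : (Fin N → Y) →ₗ[ℝ] PiLp (ENNReal.ofReal p) (fun _ : Fin N → Bool => Y) :=
    signMapAux p N with hΦdef
  have hΦapp : ∀ (y : Fin N → Y) (ε : Fin N → Bool),
      Φ y ε = ∑ j, (if ε j then (1:ℝ) else -1) • y j := fun y ε => rfl
  have key : ∀ y : Fin N → Y,
      (∑ ε : Fin N → Bool, ‖∑ j, (if ε j then y j else -(y j))‖ ^ p) ^ (1 / p) = ‖Φ y‖ := by
    intro y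
    rw [PiLp.norm_eq_sum (by rw [hqt]; exact hp0), hqt]
    congr 1
    refine Finset.sum_congr rfl fun ε _ => ?_
    congr 2
    rw [hΦapp]
    refine Finset.sum_congr rfl fun j _ => ?_
    by_cases hεj : ε j <;> simp [hεj]
  set RX : ℝ := (∑ ε : Fin N → Bool, ‖∑ j, (if ε j then x j else -(x j))‖ ^ p) ^ (1 / p) with hRX
  have base : ∀ T : Fin N → X →L[ℂ] Y, (∀ j, T j ∈ 𝒯) →
      ‖Φ (fun j => T j (x j))‖ ≤ C * RX := by
    intro T hT
    have := h N T hT x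
    rwa [key (fun j => T j (x j))] at this
  -- single-coordinate perturbation estimate
  have hsingle : ∀ (i : Fin N) (w : Y),
      ‖Φ (Pi.single i w)‖ ≤ ((2:ℝ) ^ N) ^ (1 / p) * ‖w‖ := by
    intro i w
    rw [← key]
    have hin : ∀ ε : Fin N → Bool,
        ‖∑ j, (if ε j then (Pi.single i w : Fin N → Y) j else -((Pi.single i w : Fin N → Y) j))‖ = ‖w‖ := by
      intro ε
      rw [Finset.sum_eq_single i]
      · by_cases hεi : ε i <;> simp [hεi]
      · intro j _ hji
        by_cases hεj : ε j <;> simp [hεj, Pi.single_eq_of_ne hji]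
      · simp
    have : (∑ ε : Fin N → Bool,
          ‖∑ j, (if ε j then (Pi.single i w : Fin N → Y) j else -((Pi.single i w : Fin N → Y) j))‖ ^ p)
        = (2:ℝ) ^ N * ‖w‖ ^ p := by
      simp only [hin]
      rw [Finset.sum_const, Finset.card_univ]
      simp [Fintype.card_fun, mul_comm]
    rw [this, Real.mul_rpow (by positivity) (by positivity),
      ← Real.rpow_mul (norm_nonneg w), mul_one_div_cancel (ne_of_gt hp0), Real.rpow_one]
  -- convex combinations
  have hconv : ∀ {n : ℕ} (l : Fin n → ℝ), (∀ k, 0 ≤ l k) → (∑ k, l k) = 1 →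
      ∀ z : Fin n → (Fin N → Y), (∀ k, ‖Φ (z k)‖ ≤ C * RX) →
      ‖Φ (∑ k, l k • z k)‖ ≤ C * RX := by
    intro n l hl hl1 z hz
    calc ‖Φ (∑ k, l k • z k)‖ = ‖∑ k, l k • Φ (z k)‖ := by
          rw [map_sum]
          simp only [map_smul]
    _ ≤ ∑ k, ‖l k • Φ (z k)‖ := norm_sum_le _ _
    _ ≤ ∑ k, l k * (C * RX) := by
          refine Finset.sum_le_sum fun k _ => ?_
          rw [norm_smul, Real.norm_eq_abs, abs_of_nonneg (hl k)]
          exact mul_le_mul_of_nonneg_left (hz k) (hl k)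
    _ = C * RX := by rw [← Finset.sum_mul, hl1, one_mul]
  -- main induction: replace coordinates one by one
  have main : ∀ m : ℕ, ∀ T : Fin N → X →L[ℂ] Y,
      (∀ j : Fin N, (j:ℕ) < m → T j = S j) → (∀ j : Fin N, m ≤ (j:ℕ) → T j ∈ 𝒯) →
      ‖Φ (fun j => T j (x j))‖ ≤ C * RX := by
    intro m
    induction m with
    | zero =>
      intro T _ hT
      exact base T fun j => hT j (Nat.zero_le _)
    | succ m ih =>
      intro T hTS hT𝒯
      by_cases hm : m < N
      · set i : Fin N := ⟨m, hm⟩ with hi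
        refine le_of_forall_pos_le_add fun δ hδ => ?_
        set c : ℝ := ((2:ℝ) ^ N) ^ (1 / p) with hc
        have hcpos : 0 < c := Real.rpow_pos_of_pos (by positivity) _
        obtain ⟨n, T', l, hT', hl, hl1, happ⟩ :=
          hS i 1 (fun _ => x i) (δ / c) (by positivity)
        have happ0 := happ 0
        set u : Fin N → Y := fun j => T j (x j) with hu
        set w : Y := ∑ k, l k • T' k (x i) with hw
        have h1 : ‖Φ (Function.update u i w)‖ ≤ C * RX := by
          have hupd : Function.update u i w
              = ∑ k, l k • Function.update u i (T' k (x i)) := by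
            funext j
            by_cases hj : j = i
            · subst hj
              simp [Function.update_self, hw]
            · simp only [Function.update_of_ne hj, Finset.sum_apply, Pi.smul_apply,
                Function.update_of_ne hj, ← Finset.sum_smul, hl1, one_smul]
          rw [hupd]
          refine hconv l (fun k => (hl k).1) hl1 _ fun k => ?_
          have heq : Function.update u i (T' k (x i))
              = fun j => (Function.update T i (T' k)) j (x j) := by
            funext j
            by_cases hj : j = i
            · subst hj
              simp [Function.update_self]
            · simp [Function.update_of_ne hj, hu]
          rw [heq]
          refine ih _ (fun j hj => ?_) (fun j hj => ?_)
          · have hji : j ≠ i := by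
              intro e
              rw [e] at hj
              exact absurd hj (by simp [hi])
            rw [Function.update_of_ne hji]
            exact hTS j (Nat.lt_succ_of_lt hj)
          · by_cases hj2 : j = i
            · subst hj2
              simpa [Function.update_self] using hT' k
            · rw [Function.update_of_ne hj2]
              refine hT𝒯 j ?_
              have : (j:ℕ) ≠ m := fun e => hj2 (Fin.ext (by simp [hi, e]))
              omega
        have h2 : ‖Φ (fun j => T j (x j)) - Φ (Function.update u i w)‖ < δ := by
          have hTi : T i = S i := hTS i (by simp [hi])
          have hdiff : (fun j => T j (x j)) - Function.update u i w
              = Pi.single i (S i (x i) - w) := by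
            funext j
            by_cases hj : j = i
            · subst hj
              simp [Pi.sub_apply, Function.update_self, hTi]
            · simp [Pi.sub_apply, Function.update_of_ne hj, Pi.single_eq_of_ne hj, hu]
          rw [← map_sub, hdiff]
          calc ‖Φ (Pi.single i (S i (x i) - w))‖ ≤ c * ‖S i (x i) - w‖ := hsingle i _
          _ < c * (δ / c) := by
              refine mul_lt_mul_of_pos_left ?_ hcpos
              simpa [hw] using happ0
          _ = δ := by field_simp
        calc ‖Φ (fun j => T j (x j))‖
            = ‖Φ (Function.update u i w) + (Φ (fun j => T j (x j)) - Φ (Function.update u i w))‖ := by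
              rw [add_sub_cancel]
        _ ≤ ‖Φ (Function.update u i w)‖ + ‖Φ (fun j => T j (x j)) - Φ (Function.update u i w)‖ :=
              norm_add_le _ _
        _ ≤ C * RX + δ := add_le_add h1 h2.le
      · refine ih T (fun j _ => hTS j ?_) (fun j hj => ?_)
        · exact Nat.lt_succ_of_lt (lt_of_lt_of_le j.isLt (le_of_not_gt hm))
        · exact absurd hj (not_le.mpr (lt_of_lt_of_le j.isLt (le_of_not_gt hm)))
  have hfin := main N S (fun j _ => rfl) (fun j hj => absurd hj (not_le.mpr j.isLt))
  rw [key (fun j => S j (x j))]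
  exact hfin
end

section
/- Let X and Y be complex Banach spaces, p ∈ [1,∞), and let 𝒯 be an R_p-bounded family of bounded linear operators from X to Y with bound C. Then the closure in the strong operator topology of the absolute convex hull aconv 𝒯 := {∑_{k=1}^n λ_k T_k : n ∈ ℕ, T_k ∈ 𝒯, λ_k ∈ ℂ, ∑_{k=1}^n |λ_k| = 1} is R_p-bounded with bound at most 2C. -/
open scoped BigOperators

/-- The absolute convex hull of a set of operators:
all finite combinations `∑ λ_k T_k` with `T_k ∈ 𝒯`, `λ_k ∈ ℂ`, `∑ |λ_k| = 1`. -/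
def AbsConvexHull {X Y : Type*} [NormedAddCommGroup X] [NormedSpace ℂ X]
    [NormedAddCommGroup Y] [NormedSpace ℂ Y] (𝒯 : Set (X →L[ℂ] Y)) :
    Set (X →L[ℂ] Y) :=
  {S | ∃ (n : ℕ) (T : Fin n → X →L[ℂ] Y) (l : Fin n → ℂ),
    (∀ k, T k ∈ 𝒯) ∧ (∑ k, ‖l k‖) = 1 ∧ S = ∑ k, l k • T k}

/-- The closure of a set of operators in the strong operator topology:
`S` belongs to it iff for every finite set of vectors and every `ε > 0` there
is a member of `𝒜` which is `ε`-close to `S` on these vectors. -/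
def StrongOpClosure {X Y : Type*} [NormedAddCommGroup X] [NormedSpace ℂ X]
    [NormedAddCommGroup Y] [NormedSpace ℂ Y] (𝒜 : Set (X →L[ℂ] Y)) :
    Set (X →L[ℂ] Y) :=
  {S | ∀ (N : ℕ) (x : Fin N → X) (ε : ℝ), 0 < ε →
    ∃ A ∈ 𝒜, ∀ j, ‖S (x j) - A (x j)‖ < ε}

noncomputable section RpAuxSec

namespace RpAux

variable {Z : Type*} [NormedAddCommGroup Z] [NormedSpace ℂ Z] {N : ℕ}

/-- The Rademacher sign map as a `ℂ`-linear map into the `ℓ^p`-space. -/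
def signMap (p : ℝ) (N : ℕ) (Z : Type*) [NormedAddCommGroup Z] [NormedSpace ℂ Z] :
    (Fin N → Z) →ₗ[ℂ] PiLp (ENNReal.ofReal p) (fun _ : Fin N → Bool => Z) where
  toFun y := (WithLp.equiv (ENNReal.ofReal p) ((Fin N → Bool) → Z)).symm
    (fun ε => ∑ j, (if ε j then y j else -(y j)))
  map_add' y z := by
    ext ε
    show (∑ j, (if ε j then (y + z) j else -((y + z) j)))
      = (∑ j, (if ε j then y j else -(y j))) + (∑ j, (if ε j then z j else -(z j)))
    rw [← Finset.sum_add_distrib]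
    refine Finset.sum_congr rfl fun j _ => ?_
    by_cases hj : ε j <;> simp [hj] <;> abel
  map_smul' c y := by
    ext ε
    show (∑ j, (if ε j then (c • y) j else -((c • y) j)))
      = c • (∑ j, (if ε j then y j else -(y j)))
    rw [Finset.smul_sum]
    refine Finset.sum_congr rfl fun j _ => ?_
    by_cases hj : ε j <;> simp [hj]

/-- The quantity appearing in `IsRpBoundedWith`, as a norm. -/
def G (p : ℝ) {N : ℕ} (y : Fin N → Z) : ℝ := ‖signMap p N Z y‖

theorem G_eq (p : ℝ) (hp : 1 ≤ p) (y : Fin N → Z) :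
    G p y = (∑ ε : Fin N → Bool, ‖∑ j, (if ε j then y j else -(y j))‖ ^ p) ^ (1 / p) := by
  have h0 : 0 < (ENNReal.ofReal p).toReal := by
    rw [ENNReal.toReal_ofReal (by linarith)]; linarith
  rw [G, PiLp.norm_eq_sum h0, ENNReal.toReal_ofReal (by linarith)]
  rfl

theorem G_add_le (p : ℝ) (hp : 1 ≤ p) (y z : Fin N → Z) : G p (y + z) ≤ G p y + G p z := by
  haveI : Fact (1 ≤ ENNReal.ofReal p) := ⟨ENNReal.one_le_ofReal.mpr hp⟩
  show ‖signMap p N Z (y + z)‖ ≤ ‖signMap p N Z y‖ + ‖signMap p N Z z‖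
  rw [map_add]; exact norm_add_le _ _

theorem G_smul (p : ℝ) (hp : 1 ≤ p) (c : ℂ) (y : Fin N → Z) : G p (c • y) = ‖c‖ * G p y := by
  haveI : Fact (1 ≤ ENNReal.ofReal p) := ⟨ENNReal.one_le_ofReal.mpr hp⟩
  show ‖signMap p N Z (c • y)‖ = ‖c‖ * ‖signMap p N Z y‖
  rw [map_smul]; exact norm_smul _ _

theorem G_sum_le (p : ℝ) (hp : 1 ≤ p) {n : ℕ} (w : Fin n → Fin N → Z) :
    G p (∑ k, w k) ≤ ∑ k, G p (w k) := by
  haveI : Fact (1 ≤ ENNReal.ofReal p) := ⟨ENNReal.one_le_ofReal.mpr hp⟩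
  show ‖signMap p N Z (∑ k, w k)‖ ≤ ∑ k, ‖signMap p N Z (w k)‖
  rw [map_sum]; exact norm_sum_le _ _

/-- flipping signs of the entries leaves `G` unchanged -/
theorem G_flip (p : ℝ) (hp : 1 ≤ p) (σ : Fin N → Bool) (y : Fin N → Z) :
    G p (fun j => if σ j then y j else -(y j)) = G p y := by
  rw [G_eq p hp, G_eq p hp]
  congr 1
  have hinv : Function.Involutive (fun (ε : Fin N → Bool) => fun j => (ε j == σ j)) := by
    intro ε; funext j; cases hσ : σ j <;> cases hε : ε j <;> simp [hσ, hε]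
  refine Fintype.sum_bijective _ hinv.bijective _ _ (fun ε => ?_)
  congr 2
  refine Finset.sum_congr rfl fun j _ => ?_
  cases hσ : σ j <;> cases hε : ε j <;> simp [hσ, hε]

/-- the real contraction principle for `G` -/
theorem G_contraction (p : ℝ) (hp : 1 ≤ p) (y : Fin N → Z) (a : Fin N → ℝ)
    (ha : ∀ j, |a j| ≤ 1) :
    G p (fun j => ((a j : ℝ) : ℂ) • y j) ≤ G p y := by
  have key : ∀ m : ℕ, ∀ a : Fin N → ℝ, (∀ j, |a j| ≤ 1) →
      (∀ j : Fin N, m ≤ (j : ℕ) → a j = 1 ∨ a j = -1) →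
      G p (fun j => ((a j : ℝ) : ℂ) • y j) ≤ G p y := by
    intro m
    induction m with
    | zero =>
      intro a _ hsgn
      have hfe : (fun j => ((a j : ℝ) : ℂ) • y j)
          = (fun j => if decide (a j = 1) then y j else -(y j)) := by
        funext j
        rcases hsgn j (Nat.zero_le _) with h1 | h1 <;>
          simp [h1, show ¬((-1:ℝ) = 1) by norm_num]
      rw [hfe, G_flip p hp]
    | succ m ih =>
      intro a ha hsgn
      by_cases hm : N ≤ m
      · exact ih a ha (fun j hj => absurd j.isLt (Nat.not_lt.mpr (le_trans hm hj)))
      push_neg at hm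
      set km : Fin N := ⟨m, hm⟩ with hkm
      set u : Fin N → Z := fun j => if j = km then 0 else ((a j : ℝ) : ℂ) • y j with hu
      set v : Fin N → Z := fun j => if j = km then y j else 0 with hv
      have hdecomp : ∀ s : ℝ,
          (fun j => ((Function.update a km s j : ℝ) : ℂ) • y j) = u + (s : ℂ) • v := by
        intro s; funext j
        by_cases hj : j = km
        · subst hj; simp [hu, hv]
        · simp [hu, hv, hj, Function.update_of_ne hj]
      have hside : ∀ s : ℝ, s = 1 ∨ s = -1 →
          G p (u + (s : ℂ) • v) ≤ G p y := by
        intro s hs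
        rw [← hdecomp s]
        refine ih _ (fun j => ?_) (fun j hj => ?_)
        · by_cases hj : j = km
          · subst hj; rw [Function.update_self]
            rcases hs with h | h <;> rw [h] <;> norm_num
          · rw [Function.update_of_ne hj]; exact ha j
        · by_cases hjk : j = km
          · subst hjk; rw [Function.update_self]; exact hs
          · rw [Function.update_of_ne hjk]
            refine hsgn j ?_
            have : (j : ℕ) ≠ m := fun hc => hjk (Fin.ext hc)
            omega
      set t := a km with hT
      have ht : |t| ≤ 1 := ha km
      have hmain : (fun j => ((a j : ℝ) : ℂ) • y j) = u + (t : ℂ) • v := by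
        rw [← hdecomp t, hT, Function.update_eq_self]
      have hcomb : u + (t : ℂ) • v
          = (((1 + t) / 2 : ℝ) : ℂ) • (u + ((1 : ℝ) : ℂ) • v)
            + (((1 - t) / 2 : ℝ) : ℂ) • (u + (((-1) : ℝ) : ℂ) • v) := by
        push_cast
        module
      rw [hmain, hcomb]
      refine (G_add_le p hp _ _).trans ?_
      rw [G_smul p hp, G_smul p hp]
      have h1 : G p (u + ((1 : ℝ) : ℂ) • v) ≤ G p y := hside 1 (Or.inl rfl)
      have h2 : G p (u + (((-1) : ℝ) : ℂ) • v) ≤ G p y := hside (-1) (Or.inr rfl)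
      have hn1 : ‖(((1 + t) / 2 : ℝ) : ℂ)‖ = (1 + t) / 2 := by
        rw [Complex.norm_real, Real.norm_eq_abs, abs_of_nonneg (by obtain ⟨h1', h2'⟩ := abs_le.mp ht; linarith)]
      have hn2 : ‖(((1 - t) / 2 : ℝ) : ℂ)‖ = (1 - t) / 2 := by
        rw [Complex.norm_real, Real.norm_eq_abs, abs_of_nonneg (by obtain ⟨h1', h2'⟩ := abs_le.mp ht; linarith)]
      rw [hn1, hn2]
      have e1 : (1 + t) / 2 * G p (u + ((1 : ℝ) : ℂ) • v) ≤ (1 + t) / 2 * G p y :=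
        mul_le_mul_of_nonneg_left h1 (by obtain ⟨h1', h2'⟩ := abs_le.mp ht; linarith)
      have e2 : (1 - t) / 2 * G p (u + (((-1) : ℝ) : ℂ) • v) ≤ (1 - t) / 2 * G p y :=
        mul_le_mul_of_nonneg_left h2 (by obtain ⟨h1', h2'⟩ := abs_le.mp ht; linarith)
      nlinarith [e1, e2]
  refine key N a ha (fun j hj => absurd j.isLt (Nat.not_lt.mpr hj))

end RpAux

end RpAuxSec

section MainProof

open RpAux

variable {X Y : Type*} [NormedAddCommGroup X] [NormedSpace ℂ X]
  [NormedAddCommGroup Y] [NormedSpace ℂ Y]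

/-- unimodular multiples of members of an `R_p`-bounded family -/
theorem G_unimodular (p : ℝ) (hp : 1 ≤ p) (𝒯 : Set (X →L[ℂ] Y)) (C : ℝ)
    (h : IsRpBoundedWith p 𝒯 C) (N : ℕ) (x : Fin N → X)
    (θ : Fin N → ℂ) (hθ : ∀ j, ‖θ j‖ ≤ 1)
    (T : Fin N → X →L[ℂ] Y) (hT : ∀ j, T j ∈ 𝒯) :
    G p (fun j => θ j • T j (x j)) ≤ 2 * C * G p x := by
  have hbase : G p (fun j => T j (x j)) ≤ C * G p x := by
    rw [G_eq p hp, G_eq p hp]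
    exact h N T hT x
  have hre : G p (fun j => (((θ j).re : ℝ) : ℂ) • T j (x j)) ≤ C * G p x :=
    (G_contraction p hp _ _ (fun j => (Complex.abs_re_le_norm _).trans (hθ j))).trans hbase
  have him : G p (fun j => (((θ j).im : ℝ) : ℂ) • T j (x j)) ≤ C * G p x :=
    (G_contraction p hp _ _ (fun j => (Complex.abs_im_le_norm _).trans (hθ j))).trans hbase
  have hsplit : (fun j => θ j • T j (x j))
      = (fun j => (((θ j).re : ℝ) : ℂ) • T j (x j))
        + Complex.I • (fun j => (((θ j).im : ℝ) : ℂ) • T j (x j)) := by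
    funext j
    show θ j • T j (x j) = (((θ j).re : ℝ) : ℂ) • T j (x j)
      + Complex.I • ((((θ j).im : ℝ) : ℂ) • T j (x j))
    rw [smul_smul, ← add_smul]
    congr 1
    rw [mul_comm, Complex.re_add_im]
  have hIsm : G p (Complex.I • (fun j => (((θ j).im : ℝ) : ℂ) • T j (x j)))
      = G p (fun j => (((θ j).im : ℝ) : ℂ) • T j (x j)) := by
    rw [G_smul p hp, Complex.norm_I, one_mul]
  calc G p (fun j => θ j • T j (x j))
      ≤ G p (fun j => (((θ j).re : ℝ) : ℂ) • T j (x j))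
        + G p (Complex.I • (fun j => (((θ j).im : ℝ) : ℂ) • T j (x j))) := by
        rw [hsplit]; exact G_add_le p hp _ _
    _ ≤ C * G p x + C * G p x := by rw [hIsm]; exact add_le_add hre him
    _ = 2 * C * G p x := by ring

/-- members of the absolute convex hull of an `R_p`-bounded family -/
theorem G_absconv (p : ℝ) (hp : 1 ≤ p) (𝒯 : Set (X →L[ℂ] Y)) (C : ℝ)
    (h : IsRpBoundedWith p 𝒯 C) (N : ℕ) (x : Fin N → X)
    (A : Fin N → X →L[ℂ] Y) (hA : ∀ j, A j ∈ AbsConvexHull 𝒯) :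
    G p (fun j => A j (x j)) ≤ 2 * C * G p x := by
  have key : ∀ m : ℕ, ∀ y : Fin N → Y,
      (∀ j : Fin N, (j : ℕ) < m → y j = A j (x j)) →
      (∀ j : Fin N, m ≤ (j : ℕ) → ∃ (θ : ℂ) (T : X →L[ℂ] Y),
        ‖θ‖ ≤ 1 ∧ T ∈ 𝒯 ∧ y j = θ • T (x j)) →
      G p y ≤ 2 * C * G p x := by
    intro m
    induction m with
    | zero =>
      intro y _ hy2
      choose θ T hθ hT hyeq using fun j => hy2 j (Nat.zero_le _)
      have : y = fun j => θ j • T j (x j) := funext hyeq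
      rw [this]
      exact G_unimodular p hp 𝒯 C h N x θ hθ T hT
    | succ m ih =>
      intro y hy1 hy2
      by_cases hm : N ≤ m
      · exact ih y (fun j hj => hy1 j (Nat.lt_succ_of_lt hj))
          (fun j hj => absurd j.isLt (Nat.not_lt.mpr (le_trans hm hj)))
      push_neg at hm
      set km : Fin N := ⟨m, hm⟩ with hkm
      obtain ⟨n, T, l, hT, hl, hAeq⟩ := hA km
      have hykm : y km = ∑ k, l k • T k (x km) := by
        rw [hy1 km (Nat.lt_succ_of_le le_rfl), hAeq]
        simp [ContinuousLinearMap.sum_apply, ContinuousLinearMap.smul_apply]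
      set θ : Fin n → ℂ := fun k => if l k = 0 then 1 else l k / ((‖l k‖ : ℝ) : ℂ)
        with hθdef
      set μ : Fin n → ℝ := fun k => ‖l k‖ with hμdef
      have hμθ : ∀ k, ((μ k : ℝ) : ℂ) * θ k = l k := by
        intro k
        by_cases hk : l k = 0
        · simp [hθdef, hμdef, hk]
        · simp only [hθdef, hμdef, if_neg hk]
          rw [mul_div_assoc', mul_div_cancel_left₀]
          simpa using norm_ne_zero_iff.mpr hk
      have hθ1 : ∀ k, ‖θ k‖ ≤ 1 := by
        intro k
        by_cases hk : l k = 0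
        · simp [hθdef, hk]
        · simp only [hθdef, if_neg hk]
          rw [norm_div, Complex.norm_real, Real.norm_eq_abs, abs_of_nonneg (norm_nonneg (l k)),
            div_self (norm_ne_zero_iff.mpr hk)]
      set w : Fin n → Fin N → Y := fun k => Function.update y km (θ k • T k (x km)) with hw
      have hrepr : y = ∑ k, ((μ k : ℝ) : ℂ) • w k := by
        funext j
        rw [Finset.sum_apply]
        by_cases hj : j = km
        · calc y j = ∑ k, l k • T k (x km) := by rw [hj]; exact hykm
            _ = ∑ k, (((μ k : ℝ) : ℂ) • w k) j := by
                refine Finset.sum_congr rfl fun k _ => ?_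
                simp only [Pi.smul_apply, hw, hj, Function.update_self, smul_smul, hμθ]
        · have : ∀ k, (((μ k : ℝ) : ℂ) • w k) j = ((μ k : ℝ) : ℂ) • y j := by
            intro k
            rw [Pi.smul_apply, hw]
            simp only [Function.update_of_ne hj]
          rw [Finset.sum_congr rfl fun k _ => this k, ← Finset.sum_smul]
          have hμsum : (∑ k, ((μ k : ℝ) : ℂ)) = 1 := by
            rw [← Complex.ofReal_sum]
            norm_cast
          rw [hμsum, one_smul]
      have hwk : ∀ k, G p (w k) ≤ 2 * C * G p x := by
        intro k
        refine ih (w k) (fun j hj => ?_) (fun j hj => ?_)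
        · have hjk : j ≠ km := by
            intro hc; rw [hc] at hj; simp only [hkm] at hj; omega
          rw [hw]; simp only [Function.update_of_ne hjk]
          exact hy1 j (Nat.lt_succ_of_lt hj)
        · by_cases hjk : j = km
          · subst hjk
            exact ⟨θ k, T k, hθ1 k, hT k, by rw [hw]; simp⟩
          · rw [hw]; simp only [Function.update_of_ne hjk]
            refine hy2 j ?_
            have : (j : ℕ) ≠ m := fun hc => hjk (Fin.ext hc)
            omega
      calc G p y = G p (∑ k, ((μ k : ℝ) : ℂ) • w k) := by rw [hrepr]
        _ ≤ ∑ k, G p (((μ k : ℝ) : ℂ) • w k) := G_sum_le p hp _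
        _ = ∑ k, μ k * G p (w k) := by
            refine Finset.sum_congr rfl fun k _ => ?_
            rw [G_smul p hp, Complex.norm_real, Real.norm_eq_abs,
              abs_of_nonneg (norm_nonneg (l k))]
        _ ≤ ∑ k, μ k * (2 * C * G p x) := by
            refine Finset.sum_le_sum fun k _ => ?_
            exact mul_le_mul_of_nonneg_left (hwk k) (norm_nonneg (l k))
        _ = 2 * C * G p x := by
            rw [← Finset.sum_mul]
            have hsum1 : (∑ k, μ k) = 1 := by simp only [hμdef]; exact hl
            rw [hsum1, one_mul]
  refine key N (fun j => A j (x j)) (fun j _ => rfl)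
    (fun j hj => absurd j.isLt (Nat.not_lt.mpr hj))

end MainProof

/-- The strong-operator closure of the absolute convex hull of an `R_p`-bounded
family with bound `C` is `R_p`-bounded with bound at most `2C`. -/
theorem isRpBoundedWith_strongClosure_absConvexHull
    {X Y : Type*} [NormedAddCommGroup X] [NormedSpace ℂ X] [CompleteSpace X]
    [NormedAddCommGroup Y] [NormedSpace ℂ Y] [CompleteSpace Y]
    (p : ℝ) (hp : 1 ≤ p) (𝒯 : Set (X →L[ℂ] Y)) (C : ℝ)
    (h : IsRpBoundedWith p 𝒯 C) :
    IsRpBoundedWith p (StrongOpClosure (AbsConvexHull 𝒯)) (2 * C) := by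
  intro N S hS x
  open RpAux in
  have hmain : RpAux.G p (fun j => S j (x j)) ≤ 2 * C * RpAux.G p x := by
    refine le_of_forall_pos_le_add fun η hη => ?_
    set D : ℝ := ((2 : ℝ) ^ N) ^ (1 / p) * N + 1 with hD
    have hp0 : (0 : ℝ) < p := lt_of_lt_of_le one_pos hp
    have hDpos : 0 < D := by
      rw [hD]; positivity
    set δ : ℝ := η / D with hδdef
    have hδ : 0 < δ := div_pos hη hDpos
    choose A hA1 hA2 using fun j => hS j 1 (fun _ => x j) δ hδ
    have hAx : RpAux.G p (fun j => A j (x j)) ≤ 2 * C * RpAux.G p x :=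
      G_absconv p hp 𝒯 C h N x A hA1
    have hdiff : RpAux.G p (fun j => S j (x j) - A j (x j))
        ≤ ((2 : ℝ) ^ N) ^ (1 / p) * ((N : ℝ) * δ) := by
      rw [RpAux.G_eq p hp]
      have hNδ : (0 : ℝ) ≤ (N : ℝ) * δ := by positivity
      have hterm : ∀ ε : Fin N → Bool,
          ‖∑ j, (if ε j then (S j (x j) - A j (x j)) else -((S j (x j) - A j (x j))))‖ ^ p
            ≤ ((N : ℝ) * δ) ^ p := by
        intro ε
        refine Real.rpow_le_rpow (norm_nonneg _) ?_ (le_of_lt hp0)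
        refine (norm_sum_le _ _).trans ?_
        have hjb : ∀ j : Fin N,
            ‖if ε j then (S j (x j) - A j (x j)) else -((S j (x j) - A j (x j)))‖ ≤ δ := by
          intro j
          have h0 := (hA2 j 0).le
          by_cases hj : ε j
          · rw [if_pos hj]; exact h0
          · rw [if_neg hj, norm_neg]; exact h0
        calc ∑ j, ‖if ε j then (S j (x j) - A j (x j)) else -((S j (x j) - A j (x j)))‖
            ≤ ∑ _j : Fin N, δ := Finset.sum_le_sum fun j _ => hjb j
          _ = (N : ℝ) * δ := by
              rw [Finset.sum_const, Finset.card_univ, Fintype.card_fin, nsmul_eq_mul]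
      calc (∑ ε : Fin N → Bool,
            ‖∑ j, (if ε j then (S j (x j) - A j (x j)) else -((S j (x j) - A j (x j))))‖ ^ p)
              ^ (1 / p)
          ≤ (∑ _ε : Fin N → Bool, ((N : ℝ) * δ) ^ p) ^ (1 / p) := by
            refine Real.rpow_le_rpow ?_ (Finset.sum_le_sum fun ε _ => hterm ε) (by positivity)
            exact Finset.sum_nonneg fun ε _ => Real.rpow_nonneg (norm_nonneg _) p
        _ = ((2 : ℝ) ^ N * ((N : ℝ) * δ) ^ p) ^ (1 / p) := by
            rw [Finset.sum_const, Finset.card_univ, nsmul_eq_mul]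
            congr 2
            simp [Fintype.card_fun]
        _ = ((2 : ℝ) ^ N) ^ (1 / p) * ((N : ℝ) * δ) := by
            rw [Real.mul_rpow (by positivity) (Real.rpow_nonneg hNδ p)]
            congr 1
            rw [← Real.rpow_mul hNδ, mul_one_div, div_self (ne_of_gt hp0), Real.rpow_one]
    have htri : RpAux.G p (fun j => S j (x j))
        ≤ RpAux.G p (fun j => A j (x j)) + RpAux.G p (fun j => S j (x j) - A j (x j)) := by
      have hdec : (fun j => S j (x j))
          = (fun j => A j (x j)) + (fun j => S j (x j) - A j (x j)) := by
        funext j; show S j (x j) = A j (x j) + (S j (x j) - A j (x j)); abel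
      rw [hdec]
      exact RpAux.G_add_le p hp _ _
    have hbound : ((2 : ℝ) ^ N) ^ (1 / p) * ((N : ℝ) * δ) ≤ η := by
      have h1 : ((2 : ℝ) ^ N) ^ (1 / p) * (N : ℝ) ≤ D := by rw [hD]; linarith
      calc ((2 : ℝ) ^ N) ^ (1 / p) * ((N : ℝ) * δ)
          = (((2 : ℝ) ^ N) ^ (1 / p) * (N : ℝ)) * δ := by ring
        _ ≤ D * δ := mul_le_mul_of_nonneg_right h1 hδ.le
        _ = η := by rw [hδdef, mul_div_cancel₀ _ (ne_of_gt hDpos)]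
    linarith [htri, hAx, hdiff, hbound]
  calc (∑ ε : Fin N → Bool,
        ‖∑ j, (if ε j then S j (x j) else -(S j (x j)))‖ ^ p) ^ (1 / p)
      = RpAux.G p (fun j => S j (x j)) := (RpAux.G_eq p hp _).symm
    _ ≤ 2 * C * RpAux.G p x := hmain
    _ = 2 * C * (∑ ε : Fin N → Bool,
        ‖∑ j, (if ε j then x j else -(x j))‖ ^ p) ^ (1 / p) := by rw [RpAux.G_eq p hp]
end

section
/- Let X and Y be complex Banach spaces, p ∈ [1,∞), let G ⊆ ℂ be open, K ⊆ G compact, and let H : G → L(X,Y) be holomorphic (complex differentiable at every point of G). Then the family H(K) = {H(z) : z ∈ K} of bounded linear operators from X to Y is R_p-bounded. -/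
open scoped BigOperators ENNReal NNReal

set_option maxHeartbeats 1000000
set_option synthInstance.maxHeartbeats 1000000

noncomputable section
namespace RpAux

/-- The sign `±1` attached to a boolean. -/
def bsign (b : Bool) : ℝ := if b then 1 else -1

@[simp] lemma abs_bsign (b : Bool) : |bsign b| = 1 := by cases b <;> simp [bsign]

lemma bsign_not (b : Bool) : bsign (!b) = -bsign b := by cases b <;> simp [bsign]

lemma ite_eq_bsign_smul {Z : Type*} [AddCommGroup Z] [Module ℝ Z] (b : Bool) (v : Z) :
    (if b then v else -v) = bsign b • v := by cases b <;> simp [bsign]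

/-- Interpret a function as an element of `PiLp q`. -/
def toLp (q : ℝ≥0∞) {ι Z : Type*} (f : ι → Z) : PiLp q (fun _ : ι => Z) := WithLp.toLp q f

variable {q : ℝ≥0∞} {ι Z W : Type*}

@[simp] lemma toLp_apply (f : ι → Z) (i : ι) : toLp q f i = f i := rfl

lemma toLp_add [AddCommGroup Z] (f g : ι → Z) :
    toLp q (fun i => f i + g i) = toLp q f + toLp q g := rfl

lemma toLp_smul {R : Type*} [Semiring R] [AddCommGroup Z] [Module R Z] (r : R) (f : ι → Z) :
    toLp q (fun i => r • f i) = r • toLp q f := rfl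

lemma toLp_sum [AddCommGroup Z] {α : Type*} (s : Finset α) (F : α → ι → Z) :
    toLp q (fun i => ∑ a ∈ s, F a i) = ∑ a ∈ s, toLp q (F a) := by
  classical
  induction s using Finset.cons_induction with
  | empty => simp only [Finset.sum_empty]; rfl
  | cons a s ha ih => simp only [Finset.sum_cons]; rw [← ih, ← toLp_add]

variable [Fintype ι] [NormedAddCommGroup Z] [NormedAddCommGroup W] [Fact (1 ≤ q)]

lemma toReal_pos (hq : q ≠ ⊤) : 0 < q.toReal :=
  ENNReal.toReal_pos (by have : (1:ℝ≥0∞) ≤ q := Fact.out; positivity) hq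

lemma one_le_toReal (hq : q ≠ ⊤) : 1 ≤ q.toReal := by
  have h1 : (1:ℝ≥0∞) ≤ q := Fact.out
  simpa using (ENNReal.toReal_le_toReal (by simp) hq).mpr h1

lemma toLp_norm (hq : q ≠ ⊤) (f : ι → Z) :
    ‖toLp q f‖ = (∑ i, ‖f i‖ ^ q.toReal) ^ (1 / q.toReal) :=
  PiLp.norm_eq_sum (toReal_pos hq) _

lemma toLp_norm_le (hq : q ≠ ⊤) {f : ι → Z} {g : ι → W} {M : ℝ} (hM : 0 ≤ M)
    (h : ∀ i, ‖f i‖ ≤ M * ‖g i‖) : ‖toLp q f‖ ≤ M * ‖toLp q g‖ := by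
  have ht := toReal_pos hq
  rw [toLp_norm hq, toLp_norm hq]
  calc (∑ i, ‖f i‖ ^ q.toReal) ^ (1 / q.toReal)
      ≤ (∑ i, (M * ‖g i‖) ^ q.toReal) ^ (1 / q.toReal) := by
        apply Real.rpow_le_rpow (Finset.sum_nonneg fun i _ => by positivity)
          (Finset.sum_le_sum fun i _ => Real.rpow_le_rpow (norm_nonneg _) (h i) ht.le)
          (by positivity)
    _ = M * (∑ i, ‖g i‖ ^ q.toReal) ^ (1 / q.toReal) := by
        simp_rw [Real.mul_rpow hM (norm_nonneg _)]
        rw [← Finset.mul_sum, Real.mul_rpow (by positivity)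
          (Finset.sum_nonneg fun i _ => by positivity), ← Real.rpow_mul hM,
          mul_one_div_cancel ht.ne', Real.rpow_one]

variable {X : Type*} [NormedAddCommGroup X] [NormedSpace ℝ X] {N : ℕ}

/-- The `p`-th moment of the randomized sum with coefficients `lam`. -/
def Ssum (t : ℝ) (x : Fin N → X) (lam : Fin N → ℝ) : ℝ :=
  ∑ ε : Fin N → Bool, ‖∑ j, (bsign (ε j) * lam j) • x j‖ ^ t

lemma Ssum_flip (t : ℝ) (x : Fin N → X) (lam : Fin N → ℝ) (k : Fin N) :
    Ssum t x lam = Ssum t x (Function.update lam k (-lam k)) := by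
  classical
  have hinv : Function.Involutive (fun ε : Fin N → Bool => Function.update ε k (!ε k)) := by
    intro ε; funext i
    by_cases h : i = k
    · subst h; simp
    · simp [Function.update_of_ne h]
  let e : Equiv.Perm (Fin N → Bool) := hinv.toPerm _
  have := Equiv.sum_comp e
    (fun ε : Fin N → Bool => ‖∑ j, (bsign (ε j) * lam j) • x j‖ ^ t)
  rw [Ssum, ← this]
  apply Finset.sum_congr rfl
  intro ε _
  congr 2
  apply Finset.sum_congr rfl
  intro j _
  by_cases h : j = k
  · subst h
    have h1 : e ε j = !ε j := by simp [e, Function.Involutive.toPerm]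
    rw [h1, Function.update_self, bsign_not]
    ring_nf
  · have h1 : e ε j = ε j := by simp [e, Function.Involutive.toPerm, Function.update_of_ne h]
    rw [h1, Function.update_of_ne h]

lemma Ssum_cvx {t : ℝ} (ht : 1 ≤ t) (x : Fin N → X) (lam : Fin N → ℝ) (k : Fin N)
    {s : ℝ} (hs : |s| ≤ 1) :
    Ssum t x (Function.update lam k s) ≤
      (1 + s) / 2 * Ssum t x (Function.update lam k 1)
        + (1 - s) / 2 * Ssum t x (Function.update lam k (-1)) := by
  classical
  obtain ⟨hs1, hs2⟩ := abs_le.mp hs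
  set a := (1 + s) / 2 with ha_def
  set b := (1 - s) / 2 with hb_def
  have ha : 0 ≤ a := by simp [ha_def]; linarith
  have hb : 0 ≤ b := by simp [hb_def]; linarith
  have hab : a + b = 1 := by simp [ha_def, hb_def]; ring
  set A : (Fin N → Bool) → X := fun ε => ∑ j ∈ Finset.univ.erase k, (bsign (ε j) * lam j) • x j
  set B : (Fin N → Bool) → X := fun ε => bsign (ε k) • x k
  have key : ∀ (u : ℝ) (ε : Fin N → Bool),
      (∑ j, (bsign (ε j) * Function.update lam k u j) • x j) = A ε + u • B ε := by
    intro u ε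
    rw [← Finset.sum_erase_add _ _ (Finset.mem_univ k)]
    congr 1
    · apply Finset.sum_congr rfl
      intro j hj
      rw [Function.update_of_ne (Finset.mem_erase.mp hj).1]
    · rw [Function.update_self, mul_comm, mul_smul]
  have hle : ∀ ε : Fin N → Bool,
      ‖A ε + s • B ε‖ ^ t ≤ a * ‖A ε + B ε‖ ^ t + b * ‖A ε - B ε‖ ^ t := by
    intro ε
    have hcomb : A ε + s • B ε = a • (A ε + B ε) + b • (A ε - B ε) := by
      have h1 : a • (A ε + B ε) + b • (A ε - B ε) = (a + b) • A ε + (a - b) • B ε := by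
        rw [smul_add, smul_sub, add_smul, sub_smul]; abel
      rw [h1, hab, one_smul]
      have : a - b = s := by simp [ha_def, hb_def]; ring
      rw [this]
    have hn : ‖A ε + s • B ε‖ ≤ a * ‖A ε + B ε‖ + b * ‖A ε - B ε‖ := by
      rw [hcomb]
      refine (norm_add_le _ _).trans ?_
      rw [norm_smul, norm_smul, Real.norm_eq_abs, Real.norm_eq_abs,
        abs_of_nonneg ha, abs_of_nonneg hb]
    calc ‖A ε + s • B ε‖ ^ t ≤ (a * ‖A ε + B ε‖ + b * ‖A ε - B ε‖) ^ t :=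
          Real.rpow_le_rpow (norm_nonneg _) hn (by linarith)
      _ ≤ a * ‖A ε + B ε‖ ^ t + b * ‖A ε - B ε‖ ^ t := by
          have := (convexOn_rpow ht).2 (Set.mem_Ici.mpr (norm_nonneg (A ε + B ε)))
            (Set.mem_Ici.mpr (norm_nonneg (A ε - B ε))) ha hb hab
          simpa [smul_eq_mul] using this
  calc Ssum t x (Function.update lam k s)
      = ∑ ε : Fin N → Bool, ‖A ε + s • B ε‖ ^ t := by
        apply Finset.sum_congr rfl; intro ε _; rw [key s ε]
    _ ≤ ∑ ε : Fin N → Bool, (a * ‖A ε + B ε‖ ^ t + b * ‖A ε - B ε‖ ^ t) :=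
        Finset.sum_le_sum fun ε _ => hle ε
    _ = a * Ssum t x (Function.update lam k 1) + b * Ssum t x (Function.update lam k (-1)) := by
        rw [Finset.sum_add_distrib, ← Finset.mul_sum, ← Finset.mul_sum]
        congr 1
        · congr 1; apply Finset.sum_congr rfl; intro ε _; rw [key 1 ε, one_smul]
        · congr 1; apply Finset.sum_congr rfl; intro ε _
          rw [key (-1) ε, neg_one_smul]
          congr 2
          abel

lemma Ssum_le_one {t : ℝ} (ht : 1 ≤ t) (x : Fin N → X) (lam : Fin N → ℝ)
    (h : ∀ j, |lam j| ≤ 1) : Ssum t x lam ≤ Ssum t x (fun _ => 1) := by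
  classical
  suffices aux : ∀ s : Finset (Fin N), ∀ lam : Fin N → ℝ, (∀ j, |lam j| ≤ 1) →
      (∀ j, j ∉ s → lam j = 1) → Ssum t x lam ≤ Ssum t x (fun _ => 1) by
    exact aux Finset.univ lam h (by simp)
  intro s
  induction s using Finset.induction_on with
  | empty =>
    intro lam h1 h2
    have : lam = fun _ => 1 := funext fun j => h2 j (Finset.notMem_empty j)
    rw [this]
  | @insert k s hk ih =>
    intro lam h1 h2
    have e0 : Ssum t x lam = Ssum t x (Function.update lam k (lam k)) := by
      rw [Function.update_eq_self]
    have hcvx := Ssum_cvx ht x lam k (h1 k)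
    have hflip : Ssum t x (Function.update lam k (-1)) =
        Ssum t x (Function.update lam k 1) := by
      rw [Ssum_flip t x (Function.update lam k (-1)) k]
      congr 1
      rw [Function.update_idem]
      simp
    have hup1 : Ssum t x (Function.update lam k 1) ≤ Ssum t x (fun _ => 1) := by
      apply ih
      · intro j
        by_cases hj : j = k
        · subst hj; simp
        · rw [Function.update_of_ne hj]; exact h1 j
      · intro j hj
        by_cases hjk : j = k
        · subst hjk; simp
        · rw [Function.update_of_ne hjk]
          exact h2 j (by simp [hjk, hj])
    have habs := abs_le.mp (h1 k)
    calc Ssum t x lam = Ssum t x (Function.update lam k (lam k)) := e0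
      _ ≤ (1 + lam k) / 2 * Ssum t x (Function.update lam k 1)
          + (1 - lam k) / 2 * Ssum t x (Function.update lam k (-1)) := hcvx
      _ = Ssum t x (Function.update lam k 1) := by rw [hflip]; ring
      _ ≤ Ssum t x (fun _ => 1) := hup1


section Contraction
variable {q : ℝ≥0∞} [Fact (1 ≤ q)] {X : Type*} [NormedAddCommGroup X] {N : ℕ}

lemma contract_real [NormedSpace ℝ X] (hq : q ≠ ⊤) (x : Fin N → X) (lam : Fin N → ℝ)
    (h : ∀ j, |lam j| ≤ 1) :
    ‖toLp q (fun ε : Fin N → Bool => ∑ j, (bsign (ε j) * lam j) • x j)‖ ≤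
      ‖toLp q (fun ε : Fin N → Bool => ∑ j, bsign (ε j) • x j)‖ := by
  rw [toLp_norm hq, toLp_norm hq]
  apply Real.rpow_le_rpow (Finset.sum_nonneg fun ε _ => by positivity) ?_ (by positivity)
  have := Ssum_le_one (one_le_toReal (q := q) hq) x lam h
  simpa [Ssum, mul_one] using this

lemma contract_complex [NormedSpace ℂ X] (hq : q ≠ ⊤) (x : Fin N → X) (c : Fin N → ℂ)
    {r : ℝ} (hr : 0 < r) (hc : ∀ j, ‖c j‖ ≤ r) :
    ‖toLp q (fun ε : Fin N → Bool => ∑ j, bsign (ε j) • (c j • x j))‖ ≤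
      2 * r * ‖toLp q (fun ε : Fin N → Bool => ∑ j, bsign (ε j) • x j)‖ := by
  have key : ∀ (μ : Fin N → ℝ) (y : Fin N → X), (∀ j, |μ j| ≤ r) →
      ‖toLp q (fun ε : Fin N → Bool => ∑ j, (bsign (ε j) * μ j) • y j)‖ ≤
        r * ‖toLp q (fun ε : Fin N → Bool => ∑ j, bsign (ε j) • y j)‖ := by
    intro μ y hμ
    have hfun : (fun ε : Fin N → Bool => ∑ j, (bsign (ε j) * μ j) • y j) =
        fun ε => r • ∑ j, (bsign (ε j) * (μ j / r)) • y j := by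
      funext ε
      rw [Finset.smul_sum]
      apply Finset.sum_congr rfl
      intro j _
      rw [smul_smul]
      congr 1
      field_simp
    rw [hfun, toLp_smul, norm_smul, Real.norm_eq_abs, abs_of_pos hr]
    apply mul_le_mul_of_nonneg_left _ hr.le
    apply contract_real hq
    intro j
    rw [abs_div, abs_of_pos hr, div_le_one hr]
    exact hμ j
  set Ψn := ‖toLp q (fun ε : Fin N → Bool => ∑ j, bsign (ε j) • x j)‖ with hΨ
  have split : (fun ε : Fin N → Bool => ∑ j, bsign (ε j) • (c j • x j)) =
      fun ε => (∑ j, (bsign (ε j) * (c j).re) • x j)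
        + ∑ j, (bsign (ε j) * (c j).im) • (Complex.I • x j) := by
    funext ε
    rw [← Finset.sum_add_distrib]
    apply Finset.sum_congr rfl
    intro j _
    have hcj : c j • x j = (c j).re • x j + (c j).im • (Complex.I • x j) := by
      conv_lhs => rw [← Complex.re_add_im (c j)]
      rw [add_smul, mul_smul, Complex.coe_smul, Complex.coe_smul]
    rw [hcj, smul_add, smul_smul, smul_smul]
  have him : ‖toLp q (fun ε : Fin N → Bool => ∑ j, bsign (ε j) • (Complex.I • x j))‖ = Ψn := by
    rw [hΨ, toLp_norm hq, toLp_norm hq]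
    congr 1
    apply Finset.sum_congr rfl
    intro ε _
    congr 1
    have : (∑ j, bsign (ε j) • (Complex.I • x j)) = Complex.I • ∑ j, bsign (ε j) • x j := by
      rw [Finset.smul_sum]
      exact Finset.sum_congr rfl fun j _ => (smul_comm _ _ _)
    rw [this, norm_smul, Complex.norm_I, one_mul]
  calc ‖toLp q (fun ε : Fin N → Bool => ∑ j, bsign (ε j) • (c j • x j))‖
      = ‖toLp q (fun ε : Fin N → Bool => ∑ j, (bsign (ε j) * (c j).re) • x j)
          + toLp q (fun ε : Fin N → Bool => ∑ j, (bsign (ε j) * (c j).im) • (Complex.I • x j))‖ := by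
        rw [← toLp_add, ← split]
    _ ≤ ‖toLp q (fun ε : Fin N → Bool => ∑ j, (bsign (ε j) * (c j).re) • x j)‖
          + ‖toLp q (fun ε : Fin N → Bool => ∑ j, (bsign (ε j) * (c j).im) • (Complex.I • x j))‖ :=
        norm_add_le _ _
    _ ≤ r * Ψn + r * Ψn := by
        apply add_le_add
        · exact key _ _ fun j => (Complex.abs_re_le_norm (c j)).trans
            (hc j)
        · refine (key _ _ fun j => (Complex.abs_im_le_norm (c j)).trans
            (hc j)).trans ?_
          rw [him]
    _ = 2 * r * Ψn := by ring

end Contraction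
section Ball
variable {q : ℝ≥0∞} [Fact (1 ≤ q)]
variable {X Y : Type*} [NormedAddCommGroup X] [NormedSpace ℂ X]
  [NormedAddCommGroup Y] [NormedSpace ℂ Y]

lemma ball_bound (hq : q ≠ ⊤) {H : ℂ → (X →L[ℂ] Y)}
    {P : FormalMultilinearSeries ℂ ℂ (X →L[ℂ] Y)} {c : ℂ} {R : ℝ≥0∞}
    (hfp : HasFPowerSeriesOnBall H P c R) {r : ℝ≥0} (hr : 0 < r) (hrR : (r : ℝ≥0∞) < R) :
    ∃ C : ℝ, 0 ≤ C ∧ ∀ (N : ℕ) (z : Fin N → ℂ) (x : Fin N → X), (∀ j, dist (z j) c ≤ r) →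
      ‖toLp q (fun ε : Fin N → Bool => ∑ j, bsign (ε j) • H (z j) (x j))‖ ≤
        C * ‖toLp q (fun ε : Fin N → Bool => ∑ j, bsign (ε j) • x j)‖ := by
  have hsumP : Summable (fun n => ‖P n‖ * (r : ℝ) ^ n) :=
    P.summable_norm_mul_pow (hrR.trans_le hfp.r_le)
  set M := ∑' n, ‖P n‖ * (r : ℝ) ^ n with hM_def
  have hM : 0 ≤ M := tsum_nonneg fun n => by positivity
  refine ⟨2 * M, by positivity, ?_⟩
  intro N z x hz
  classical
  have hr' : (0 : ℝ) < r := hr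
  set a : ℕ → (X →L[ℂ] Y) := fun n => P n (fun _ => 1) with ha_def
  have ha : ∀ n, ‖a n‖ ≤ ‖P n‖ := by
    intro n
    calc ‖P n (fun _ => 1)‖ ≤ ‖P n‖ * ∏ _i : Fin n, ‖(1 : ℂ)‖ := (P n).le_opNorm _
      _ = ‖P n‖ := by simp
  set Ψ := toLp q (fun ε : Fin N → Bool => ∑ j, bsign (ε j) • x j) with hΨ_def
  set w : ℕ → (Fin N → Bool) → X :=
    fun n ε => ∑ j, bsign (ε j) • ((z j - c) ^ n • x j) with hw_def
  set F : ℕ → PiLp q (fun _ : Fin N → Bool => Y) :=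
    fun n => toLp q (fun ε => (a n) (w n ε)) with hF_def
  set Φ := toLp q (fun ε : Fin N → Bool => ∑ j, bsign (ε j) • H (z j) (x j)) with hΦ_def
  -- pointwise convergence
  have hpt : ∀ ε : Fin N → Bool, HasSum (fun n => F n ε) (Φ ε) := by
    intro ε
    have hj : ∀ j, HasSum (fun n => ((z j - c) ^ n • a n) (x j)) (H (z j) (x j)) := by
      intro j
      have hmem : (z j - c) ∈ Metric.eball (0 : ℂ) R := by
        rw [Metric.mem_eball, edist_zero_right]
        refine lt_of_le_of_lt (ENNReal.coe_le_coe.mpr ?_) hrR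
        rw [← NNReal.coe_le_coe, coe_nnnorm, ← dist_eq_norm]
        exact hz j
      have h0 := hfp.hasSum hmem
      rw [add_sub_cancel] at h0
      have h1 := h0.mapL (ContinuousLinearMap.apply ℂ Y (x j))
      have heq : ∀ n, (P n (fun _ => z j - c)) = (z j - c) ^ n • a n := by
        intro n
        have h2 := (P n).map_smul_univ (fun _ => z j - c) (fun _ => (1 : ℂ))
        simp only [smul_eq_mul, mul_one, Finset.prod_const, Finset.card_univ,
          Fintype.card_fin] at h2
        exact h2
      simp only [ContinuousLinearMap.apply_apply] at h1
      have : (fun n => (P n (fun _ => z j - c)) (x j)) =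
          fun n => ((z j - c) ^ n • a n) (x j) := by
        funext n; rw [heq n]
      rwa [this] at h1
    have hsum : HasSum
        (fun n => ∑ j, bsign (ε j) • (((z j - c) ^ n • a n) (x j)))
        (∑ j, bsign (ε j) • H (z j) (x j)) :=
      hasSum_sum fun j _ => ((hj j).const_smul _)
    have hFeq : (fun n => F n ε) =
        fun n => ∑ j, bsign (ε j) • (((z j - c) ^ n • a n) (x j)) := by
      funext n
      show (a n) (∑ j, bsign (ε j) • ((z j - c) ^ n • x j)) = _
      rw [map_sum]
      apply Finset.sum_congr rfl
      intro j _
      rw [ContinuousLinearMap.map_smul_of_tower, ContinuousLinearMap.map_smul,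
        ContinuousLinearMap.smul_apply]
    rw [hFeq]
    exact hsum
  -- convergence in PiLp
  have hFS : HasSum F Φ := by
    let e := PiLp.continuousLinearEquiv q ℝ (fun _ : Fin N → Bool => Y)
    have h2 : HasSum (fun n => e (F n)) (e Φ) := Pi.hasSum.mpr hpt
    have h3 := (ContinuousLinearEquiv.hasSum e).mp h2
    rwa [ContinuousLinearEquiv.symm_apply_apply] at h3
  -- norm bounds
  have hFnorm : ∀ n, ‖F n‖ ≤ 2 * (‖P n‖ * (r : ℝ) ^ n) * ‖Ψ‖ := by
    intro n
    have h1 : ‖F n‖ ≤ ‖a n‖ * ‖toLp q (w n)‖ :=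
      toLp_norm_le hq (norm_nonneg _) fun ε => (a n).le_opNorm _
    have h2 : ‖toLp q (w n)‖ ≤ 2 * (r : ℝ) ^ n * ‖Ψ‖ := by
      apply contract_complex hq x (fun j => (z j - c) ^ n) (pow_pos hr' n)
      intro j
      rw [norm_pow]
      apply pow_le_pow_left₀ (norm_nonneg _)
      rw [← dist_eq_norm]
      exact hz j
    calc ‖F n‖ ≤ ‖a n‖ * (2 * (r : ℝ) ^ n * ‖Ψ‖) :=
          h1.trans (mul_le_mul_of_nonneg_left h2 (norm_nonneg _))
      _ ≤ ‖P n‖ * (2 * (r : ℝ) ^ n * ‖Ψ‖) :=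
          mul_le_mul_of_nonneg_right (ha n) (by positivity)
      _ = 2 * (‖P n‖ * (r : ℝ) ^ n) * ‖Ψ‖ := by ring
  have hsumb : Summable (fun n => 2 * (‖P n‖ * (r : ℝ) ^ n) * ‖Ψ‖) :=
    (hsumP.mul_left 2).mul_right ‖Ψ‖
  have hsumF : Summable (fun n => ‖F n‖) :=
    Summable.of_nonneg_of_le (fun n => norm_nonneg _) hFnorm hsumb
  calc ‖Φ‖ = ‖∑' n, F n‖ := by rw [hFS.tsum_eq]
    _ ≤ ∑' n, ‖F n‖ := norm_tsum_le_tsum_norm hsumF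
    _ ≤ ∑' n, 2 * (‖P n‖ * (r : ℝ) ^ n) * ‖Ψ‖ := Summable.tsum_le_tsum hFnorm hsumF hsumb
    _ = 2 * M * ‖Ψ‖ := by
        rw [tsum_mul_right, tsum_mul_left]

end Ball
end RpAux
end

open scoped BigOperators

/-- If `H : G → L(X,Y)` is holomorphic on an open set `G ⊆ ℂ` and `K ⊆ G` is
compact, then the family `H(K)` is `R_p`-bounded. -/
theorem rpBounded_of_holomorphic_on_compact
    {X Y : Type*} [NormedAddCommGroup X] [NormedSpace ℂ X] [CompleteSpace X]
    [NormedAddCommGroup Y] [NormedSpace ℂ Y] [CompleteSpace Y]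
    (p : ℝ) (hp : 1 ≤ p) (G : Set ℂ) (hG : IsOpen G) (K : Set ℂ)
    (hK : IsCompact K) (hKG : K ⊆ G)
    (H : ℂ → (X →L[ℂ] Y)) (hol : DifferentiableOn ℂ H G) :
    ∃ C : ℝ, IsRpBoundedWith p (H '' K) C := by
  classical
  set q : ℝ≥0∞ := ENNReal.ofReal p with hq_def
  haveI : Fact (1 ≤ q) := ⟨ENNReal.one_le_ofReal.mpr hp⟩
  have hq : q ≠ ⊤ := ENNReal.ofReal_ne_top
  have htq : q.toReal = p := ENNReal.toReal_ofReal (by linarith)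
  have h1 : ∀ w : K, ∃ (r : ℝ≥0) (C : ℝ), 0 < r ∧ 0 ≤ C ∧
      ∀ (N : ℕ) (z : Fin N → ℂ) (x : Fin N → X), (∀ j, dist (z j) (w : ℂ) ≤ r) →
        ‖RpAux.toLp q (fun ε : Fin N → Bool => ∑ j, RpAux.bsign (ε j) • H (z j) (x j))‖ ≤
          C * ‖RpAux.toLp q (fun ε : Fin N → Bool => ∑ j, RpAux.bsign (ε j) • x j)‖ := by
    intro w
    have hA : AnalyticAt ℂ H (w : ℂ) := hol.analyticAt (hG.mem_nhds (hKG w.2))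
    obtain ⟨P, hP⟩ := hA
    obtain ⟨R, hfp⟩ := hP
    obtain ⟨r, hr0, hrR⟩ := ENNReal.lt_iff_exists_nnreal_btwn.mp hfp.r_pos
    obtain ⟨C, hC0, hC⟩ := RpAux.ball_bound (q := q) hq hfp (ENNReal.coe_pos.mp hr0) hrR
    exact ⟨r, C, ENNReal.coe_pos.mp hr0, hC0, hC⟩
  choose rad Cw hrad hCw hprop using h1
  obtain ⟨t, ht⟩ := hK.elim_finite_subcover (fun w : K => Metric.ball (w : ℂ) (rad w))
    (fun w => Metric.isOpen_ball)
    (fun z hz => Set.mem_iUnion.mpr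
      ⟨⟨z, hz⟩, Metric.mem_ball_self (by exact_mod_cast hrad ⟨z, hz⟩)⟩)
  refine ⟨∑ w ∈ t, Cw w, ?_⟩
  intro N T hT x
  choose z hzK hzT using hT
  have hcov : ∀ j, ∃ w, w ∈ t ∧ z j ∈ Metric.ball (w : ℂ) (rad w) := by
    intro j
    obtain ⟨w, hw1, hw2⟩ := Set.mem_iUnion₂.mp (ht (hzK j))
    exact ⟨w, hw1, hw2⟩
  choose g hgt hgb using hcov
  simp only [RpAux.ite_eq_bsign_smul]
  have e1 := RpAux.toLp_norm (q := q) hq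
    (fun ε : Fin N → Bool => ∑ j, RpAux.bsign (ε j) • T j (x j))
  have e2 := RpAux.toLp_norm (q := q) hq
    (fun ε : Fin N → Bool => ∑ j, RpAux.bsign (ε j) • x j)
  rw [htq] at e1 e2
  rw [← e1, ← e2]
  set xw : K → Fin N → X := fun w j => if g j = w then x j else 0 with hxw
  set zw : K → Fin N → ℂ := fun w j => if g j = w then z j else (w : ℂ) with hzw
  have hsplit : RpAux.toLp q (fun ε : Fin N → Bool => ∑ j, RpAux.bsign (ε j) • T j (x j)) =
      ∑ w ∈ t, RpAux.toLp q
        (fun ε : Fin N → Bool => ∑ j, RpAux.bsign (ε j) • H (zw w j) (xw w j)) := by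
    rw [← RpAux.toLp_sum]
    congr 1
    funext ε
    show (∑ j, RpAux.bsign (ε j) • T j (x j)) =
      ∑ w ∈ t, ∑ j, RpAux.bsign (ε j) • H (zw w j) (xw w j)
    rw [Finset.sum_comm]
    apply Finset.sum_congr rfl
    intro j _
    have hterm : ∀ w : K, RpAux.bsign (ε j) • H (zw w j) (xw w j) =
        if g j = w then RpAux.bsign (ε j) • T j (x j) else 0 := by
      intro w
      by_cases h : g j = w
      · simp only [hxw, hzw, if_pos h]
        rw [hzT j]
      · simp [hxw, hzw, h]
    rw [Finset.sum_congr rfl (fun w _ => hterm w),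
      Finset.sum_ite_eq t (g j) (fun _ => RpAux.bsign (ε j) • T j (x j)), if_pos (hgt j)]
  rw [hsplit]
  refine (norm_sum_le _ _).trans ?_
  refine (Finset.sum_le_sum (fun w hw => ?_)).trans_eq (Finset.sum_mul _ _ _).symm
  have hdist : ∀ j, dist (zw w j) (w : ℂ) ≤ rad w := by
    intro j
    by_cases h : g j = w
    · have hb := hgb j
      rw [Metric.mem_ball] at hb
      rw [h] at hb
      simp only [hzw, if_pos h]
      exact hb.le
    · simp [hzw, h]
  refine (hprop w N (zw w) (xw w) hdist).trans ?_
  apply mul_le_mul_of_nonneg_left _ (hCw w)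
  have hfun : (fun ε : Fin N → Bool => ∑ j, RpAux.bsign (ε j) • xw w j) =
      fun ε : Fin N → Bool =>
        ∑ j, (RpAux.bsign (ε j) * (if g j = w then (1:ℝ) else 0)) • x j := by
    funext ε
    apply Finset.sum_congr rfl
    intro j _
    by_cases h : g j = w <;> simp [hxw, h]
  rw [hfun]
  exact RpAux.contract_real hq x _ (fun j => by by_cases h : g j = w <;> simp [h])
end

section
/- Let X be a complex Banach space, p ∈ [1,∞), θ ∈ (0,π], let D ⊆ X be a dense linear subspace and A : D → X a linear operator. Assume that Σ_θ ⊆ ρ(A), that the family {λ(λ−A)^{−1} : λ ∈ Σ_θ} is R_p-bounded with bound R_θ(A), and that the family {A(λ−A)^{−1} : λ ∈ Σ_θ} is R_p-bounded with bound R̃_θ(A). Let B be a linear operator in X whose domain contains D and which satisfies ‖Bx‖ ≤ a‖Ax‖ for all x ∈ D, where 0 ≤ a < 1/R̃_θ(A). Then the operator A + B with domain D satisfies Σ_θ ⊆ ρ(A+B), and the family {λ(λ−(A+B))^{−1} : λ ∈ Σ_θ} is R_p-bounded with bound at most R_θ(A)/(1 − a·R̃_θ(A)). In particular A + B is R-sectorial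 with angle at least θ. -/
open scoped BigOperators

/-- The open sector `Σ_φ = {z ∈ ℂ \ {0} : |arg z| < φ}`. -/
def Sector (φ : ℝ) : Set ℂ := {z : ℂ | z ≠ 0 ∧ |Complex.arg z| < φ}

lemma rp_opNorm {X Y : Type*} [NormedAddCommGroup X] [NormedSpace ℂ X]
    [NormedAddCommGroup Y] [NormedSpace ℂ Y]
    {p : ℝ} (hp : 1 ≤ p) {𝒯 : Set (X →L[ℂ] Y)} {C : ℝ}
    (h : IsRpBoundedWith p 𝒯 C) {T : X →L[ℂ] Y} (hT : T ∈ 𝒯) (x : X) :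
    ‖T x‖ ≤ C * ‖x‖ := by
  have hp0 : (0:ℝ) < p := lt_of_lt_of_le zero_lt_one hp
  have hpne : p ≠ 0 := ne_of_gt hp0
  have h1 := h 1 (fun _ => T) (fun _ => hT) (fun _ => x)
  simp only [Fin.sum_univ_one] at h1
  have key : ∀ (v : Y),
      ∑ ε : Fin 1 → Bool, ‖if ε 0 then v else -v‖ ^ p = 2 * ‖v‖ ^ p := by
    intro v
    have h2 : ∀ ε : Fin 1 → Bool, ‖if ε 0 then v else -v‖ ^ p = ‖v‖ ^ p := by
      intro ε
      cases hε : ε 0 <;> simp [hε]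
    rw [Finset.sum_congr rfl fun ε _ => h2 ε, Finset.sum_const, nsmul_eq_mul]
    norm_num
  have key' : ∀ (v : X),
      ∑ ε : Fin 1 → Bool, ‖if ε 0 then v else -v‖ ^ p = 2 * ‖v‖ ^ p := by
    intro v
    have h2 : ∀ ε : Fin 1 → Bool, ‖if ε 0 then v else -v‖ ^ p = ‖v‖ ^ p := by
      intro ε
      cases hε : ε 0 <;> simp [hε]
    rw [Finset.sum_congr rfl fun ε _ => h2 ε, Finset.sum_const, nsmul_eq_mul]
    norm_num
  rw [key (T x), key' x] at h1
  have hcanc : ∀ t : ℝ, 0 ≤ t → (2 * t ^ p) ^ (1/p) = 2 ^ (1/p) * t := by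
    intro t ht
    rw [Real.mul_rpow (by norm_num) (Real.rpow_nonneg ht p), ← Real.rpow_mul ht,
      mul_one_div_cancel hpne, Real.rpow_one]
  rw [hcanc _ (norm_nonneg _), hcanc _ (norm_nonneg _), mul_left_comm] at h1
  exact le_of_mul_le_mul_left h1 (Real.rpow_pos_of_pos two_pos _)

lemma rpow_sum_le_core {p : ℝ} (hp : 1 ≤ p) {ι : Type*} [Fintype ι] (c : ℝ) (hc : 0 ≤ c)
    (u v : ι → ℝ) (hu : ∀ ε, 0 ≤ u ε) (hv : ∀ ε, 0 ≤ v ε) (huv : ∀ ε, u ε ≤ c * v ε) :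
    (∑ ε, u ε ^ p) ^ (1/p) ≤ c * (∑ ε, v ε ^ p) ^ (1/p) := by
  have hp0 : (0:ℝ) < p := lt_of_lt_of_le zero_lt_one hp
  have hpne : p ≠ 0 := ne_of_gt hp0
  have h1 : ∑ ε, u ε ^ p ≤ ∑ ε, (c * v ε) ^ p :=
    Finset.sum_le_sum fun ε _ => Real.rpow_le_rpow (hu ε) (huv ε) hp0.le
  have h2 : ∑ ε, (c * v ε) ^ p = c ^ p * ∑ ε, v ε ^ p := by
    rw [Finset.mul_sum]
    exact Finset.sum_congr rfl fun ε _ => Real.mul_rpow hc (hv ε)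
  have hsum : (0:ℝ) ≤ ∑ ε, u ε ^ p :=
    Finset.sum_nonneg fun ε _ => Real.rpow_nonneg (hu ε) p
  have hsumv : (0:ℝ) ≤ ∑ ε, v ε ^ p :=
    Finset.sum_nonneg fun ε _ => Real.rpow_nonneg (hv ε) p
  calc (∑ ε, u ε ^ p) ^ (1/p)
      ≤ (c ^ p * ∑ ε, v ε ^ p) ^ (1/p) :=
        Real.rpow_le_rpow hsum (h1.trans_eq h2) (by positivity)
    _ = c * (∑ ε, v ε ^ p) ^ (1/p) := by
        rw [Real.mul_rpow (Real.rpow_nonneg hc p) hsumv, ← Real.rpow_mul hc,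
          mul_one_div_cancel hpne, Real.rpow_one]

lemma nu_add_le {X : Type*} [NormedAddCommGroup X] {p : ℝ} (hp : 1 ≤ p) {N : ℕ}
    (y z : Fin N → X) :
    (∑ ε : Fin N → Bool, ‖∑ j, (if ε j then y j + z j else -(y j + z j))‖ ^ p) ^ (1/p)
      ≤ (∑ ε : Fin N → Bool, ‖∑ j, (if ε j then y j else -(y j))‖ ^ p) ^ (1/p)
        + (∑ ε : Fin N → Bool, ‖∑ j, (if ε j then z j else -(z j))‖ ^ p) ^ (1/p) := by
  have hp0 : (0:ℝ) < p := lt_of_lt_of_le zero_lt_one hp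
  have h1 : ∀ ε : Fin N → Bool,
      ‖∑ j, (if ε j then y j + z j else -(y j + z j))‖
        ≤ ‖∑ j, (if ε j then y j else -(y j))‖ + ‖∑ j, (if ε j then z j else -(z j))‖ := by
    intro ε
    have h2 : ∑ j, (if ε j then y j + z j else -(y j + z j))
        = (∑ j, (if ε j then y j else -(y j))) + ∑ j, (if ε j then z j else -(z j)) := by
      rw [← Finset.sum_add_distrib]
      refine Finset.sum_congr rfl fun j _ => ?_
      cases hε : ε j <;> simp [hε] <;> abel
    rw [h2]
    exact norm_add_le _ _
  have hL := Real.Lp_add_le (Finset.univ)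
    (fun ε : Fin N → Bool => ‖∑ j, (if ε j then y j else -(y j))‖)
    (fun ε : Fin N → Bool => ‖∑ j, (if ε j then z j else -(z j))‖) hp
  simp only [abs_norm] at hL
  calc (∑ ε : Fin N → Bool, ‖∑ j, (if ε j then y j + z j else -(y j + z j))‖ ^ p) ^ (1/p)
      ≤ (∑ ε : Fin N → Bool, |‖∑ j, (if ε j then y j else -(y j))‖
          + ‖∑ j, (if ε j then z j else -(z j))‖| ^ p) ^ (1/p) := by
        refine Real.rpow_le_rpow (Finset.sum_nonneg fun ε _ => Real.rpow_nonneg (norm_nonneg _) p)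
          (Finset.sum_le_sum fun ε _ => Real.rpow_le_rpow (norm_nonneg _) ?_ hp0.le)
          (by positivity)
        exact (h1 ε).trans (le_abs_self _)
    _ ≤ _ := hL

/-- **Perturbation of `R`-sectoriality.** Let `A : D → X` be a densely defined
linear operator whose resolvent exists on the sector `Σ_θ` (witnessed by the
family `RA` of bounded operators), such that `{λ(λ−A)^{−1} : λ ∈ Σ_θ}` is
`R_p`-bounded with bound `RθA` and `{A(λ−A)^{−1} = λ(λ−A)^{−1} − id : λ ∈ Σ_θ}`
is `R_p`-bounded with bound `R̃θA`. If `B` is defined on `D` with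
`‖Bx‖ ≤ a ‖Ax‖` for all `x ∈ D` and `a · R̃θA < 1`, then `Σ_θ` lies in the
resolvent set of `A + B` and `{λ(λ−(A+B))^{−1} : λ ∈ Σ_θ}` is `R_p`-bounded
with bound at most `RθA / (1 − a · R̃θA)`; in particular `A + B` is
`R`-sectorial with angle at least `θ`. -/
theorem perturbation_rSectorial
    {X : Type*} [NormedAddCommGroup X] [NormedSpace ℂ X] [CompleteSpace X]
    (p : ℝ) (hp : 1 ≤ p) (θ : ℝ) (hθ1 : 0 < θ) (hθ2 : θ ≤ Real.pi)
    (D : Submodule ℂ X) (hD : Dense (D : Set X))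
    (A : D →ₗ[ℂ] X) (B : D →ₗ[ℂ] X)
    (RA : ℂ → (X →L[ℂ] X))
    (hmem : ∀ lam ∈ Sector θ, ∀ x : X, RA lam x ∈ D)
    (heq1 : ∀ (lam : ℂ) (hlam : lam ∈ Sector θ) (x : X),
      lam • RA lam x - A ⟨RA lam x, hmem lam hlam x⟩ = x)
    (heq2 : ∀ lam ∈ Sector θ, ∀ d : D, RA lam (lam • (d : X) - A d) = (d : X))
    (RθA RtθA : ℝ)
    (hR : IsRpBoundedWith p {T : X →L[ℂ] X | ∃ lam ∈ Sector θ, T = lam • RA lam} RθA)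
    (hRt : IsRpBoundedWith p
      {T : X →L[ℂ] X | ∃ lam ∈ Sector θ,
        T = lam • RA lam - ContinuousLinearMap.id ℂ X} RtθA)
    (a : ℝ) (ha0 : 0 ≤ a) (hB : ∀ d : D, ‖B d‖ ≤ a * ‖A d‖)
    (hsmall : a * RtθA < 1) :
    ∃ RAB : ℂ → (X →L[ℂ] X),
      (∀ lam ∈ Sector θ, ∀ x : X, ∃ hd : RAB lam x ∈ D,
        lam • RAB lam x - (A ⟨RAB lam x, hd⟩ + B ⟨RAB lam x, hd⟩) = x) ∧
      (∀ lam ∈ Sector θ, ∀ d : D, RAB lam (lam • (d : X) - (A d + B d)) = (d : X)) ∧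
      IsRpBoundedWith p {T : X →L[ℂ] X | ∃ lam ∈ Sector θ, T = lam • RAB lam}
        (RθA / (1 - a * RtθA)) := by
  classical
  have hp0 : (0:ℝ) < p := lt_of_lt_of_le zero_lt_one hp
  have hpne : p ≠ 0 := ne_of_gt hp0
  -- operator norm bound for λ(λ-A)⁻¹ - id
  have hRtop : ∀ lam ∈ Sector θ, ∀ x : X, ‖lam • RA lam x - x‖ ≤ RtθA * ‖x‖ := by
    intro lam hlam x
    have h := rp_opNorm hp hRt (T := lam • RA lam - ContinuousLinearMap.id ℂ X)
      ⟨lam, hlam, rfl⟩ x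
    simpa using h
  have hAres : ∀ (lam : ℂ) (hlam : lam ∈ Sector θ) (x : X),
      A ⟨RA lam x, hmem lam hlam x⟩ = lam • RA lam x - x := by
    intro lam hlam x
    have h := heq1 lam hlam x
    refine eq_sub_of_add_eq ?_
    rw [add_comm]
    exact (sub_eq_iff_eq_add.mp h).symm
  -- construct S = B (λ-A)⁻¹
  have hSex : ∀ (lam : ℂ) (hlam : lam ∈ Sector θ), ∃ S : X →L[ℂ] X,
      (∀ x : X, S x = B ⟨RA lam x, hmem lam hlam x⟩) ∧
      ∀ x : X, ‖S x‖ ≤ (a * RtθA) * ‖x‖ := by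
    intro lam hlam
    have hbd : ∀ x : X, ‖B ⟨RA lam x, hmem lam hlam x⟩‖ ≤ (a * RtθA) * ‖x‖ := by
      intro x
      calc ‖B ⟨RA lam x, hmem lam hlam x⟩‖ ≤ a * ‖A ⟨RA lam x, hmem lam hlam x⟩‖ := hB _
        _ = a * ‖lam • RA lam x - x‖ := by rw [hAres lam hlam x]
        _ ≤ a * (RtθA * ‖x‖) := mul_le_mul_of_nonneg_left (hRtop lam hlam x) ha0
        _ = (a * RtθA) * ‖x‖ := by ring
    refine ⟨LinearMap.mkContinuous
      { toFun := fun x => B ⟨RA lam x, hmem lam hlam x⟩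
        map_add' := ?_
        map_smul' := ?_ } (a * RtθA) hbd, fun x => rfl, hbd⟩
    · intro u v
      show B ⟨RA lam (u + v), hmem lam hlam (u + v)⟩
          = B ⟨RA lam u, hmem lam hlam u⟩ + B ⟨RA lam v, hmem lam hlam v⟩
      rw [← map_add]
      congr 1
      apply Subtype.ext
      exact map_add (RA lam) u v
    · intro c u
      show B ⟨RA lam (c • u), hmem lam hlam (c • u)⟩ = c • B ⟨RA lam u, hmem lam hlam u⟩
      rw [← map_smul]
      congr 1
      apply Subtype.ext
      exact map_smul (RA lam) c u
  choose S hSapp hSbd using hSex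
  have hSnorm : ∀ (lam : ℂ) (hlam : lam ∈ Sector θ), ‖S lam hlam‖ < 1 := by
    intro lam hlam
    have h1 : ‖S lam hlam‖ ≤ max (a * RtθA) 0 :=
      ContinuousLinearMap.opNorm_le_bound _ (le_max_right _ _) fun x =>
        (hSbd lam hlam x).trans (mul_le_mul_of_nonneg_right (le_max_left _ _) (norm_nonneg x))
    exact lt_of_le_of_lt h1 (max_lt hsmall zero_lt_one)
  -- construct U = (1 - S)⁻¹ via Neumann series
  have hUex : ∀ (lam : ℂ) (hlam : lam ∈ Sector θ), ∃ U : X →L[ℂ] X,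
      ((1 - S lam hlam) * U = 1 ∧ U * (1 - S lam hlam) = 1) ∧
      HasSum (fun n : ℕ => (S lam hlam) ^ n) U :=
    fun lam hlam => ⟨∑' n : ℕ, (S lam hlam) ^ n,
      ⟨mul_neg_geom_series _ (hSnorm lam hlam), geom_series_mul_neg _ (hSnorm lam hlam)⟩,
      (summable_geometric_of_norm_lt_one (hSnorm lam hlam)).hasSum⟩
  choose U hU12 hUsum using hUex
  have hU1 : ∀ lam hlam, (1 - S lam hlam) * U lam hlam = 1 := fun lam hlam => (hU12 lam hlam).1
  have hU2 : ∀ lam hlam, U lam hlam * (1 - S lam hlam) = 1 := fun lam hlam => (hU12 lam hlam).2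
  refine ⟨fun lam => if hlam : lam ∈ Sector θ then (RA lam).comp (U lam hlam) else 0,
    ?_, ?_, ?_⟩
  · -- right inverse property
    intro lam hlam x
    beta_reduce
    rw [dif_pos hlam]
    refine ⟨hmem lam hlam (U lam hlam x), ?_⟩
    have hxy : U lam hlam x - S lam hlam (U lam hlam x) = x := by
      have h := congrArg (fun (T : X →L[ℂ] X) => T x) (hU1 lam hlam)
      simpa [ContinuousLinearMap.mul_apply, ContinuousLinearMap.sub_apply,
        ContinuousLinearMap.one_apply] using h
    show lam • RA lam (U lam hlam x)
        - (A ⟨RA lam (U lam hlam x), hmem lam hlam (U lam hlam x)⟩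
          + B ⟨RA lam (U lam hlam x), hmem lam hlam (U lam hlam x)⟩) = x
    rw [hAres lam hlam (U lam hlam x), ← hSapp lam hlam (U lam hlam x)]
    have hab : lam • RA lam (U lam hlam x)
        - ((lam • RA lam (U lam hlam x) - U lam hlam x) + S lam hlam (U lam hlam x))
        = U lam hlam x - S lam hlam (U lam hlam x) := by abel
    rw [hab, hxy]
  · -- left inverse property
    intro lam hlam d
    beta_reduce
    rw [dif_pos hlam]
    have hres : RA lam (lam • (d:X) - A d) = (d:X) := heq2 lam hlam d
    have hSv : S lam hlam (lam • (d:X) - A d) = B d := by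
      rw [hSapp lam hlam (lam • (d:X) - A d)]
      congr 1
      apply Subtype.ext
      exact hres
    have hUv : U lam hlam (lam • (d:X) - (A d + B d)) = lam • (d:X) - A d := by
      have h2 : (1 - S lam hlam) (lam • (d:X) - A d) = lam • (d:X) - (A d + B d) := by
        simp only [ContinuousLinearMap.sub_apply, ContinuousLinearMap.one_apply, hSv]
        abel
      rw [← h2]
      have h := congrArg (fun (T : X →L[ℂ] X) => T (lam • (d:X) - A d)) (hU2 lam hlam)
      simpa [ContinuousLinearMap.mul_apply, ContinuousLinearMap.one_apply] using h
    show RA lam (U lam hlam (lam • (d:X) - (A d + B d))) = (d:X)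
    rw [hUv, hres]
  · -- R-boundedness
    intro N T hT x
    choose lam hlam hTeq using hT
    by_cases hxz : ∀ j, x j = 0
    · have h1 : ∀ ε : Fin N → Bool, ∑ j, (if ε j then T j (x j) else -(T j (x j))) = 0 :=
        fun ε => Finset.sum_eq_zero fun j _ => by simp [hxz j]
      have h2 : ∀ ε : Fin N → Bool, ∑ j, (if ε j then x j else -(x j)) = 0 :=
        fun ε => Finset.sum_eq_zero fun j _ => by simp [hxz j]
      simp only [h1, h2, norm_zero, Real.zero_rpow hpne, Finset.sum_const, smul_zero,
        Real.zero_rpow (one_div_ne_zero hpne), mul_zero, le_refl]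
    · push_neg at hxz
      obtain ⟨j0, hj0⟩ := hxz
      have hx0 : (0:ℝ) < ‖x j0‖ := norm_pos_iff.mpr hj0
      have hone : (1:ℂ) ∈ Sector θ :=
        ⟨one_ne_zero, by rw [Complex.arg_one]; simpa using hθ1⟩
      have hRθ0 : 0 ≤ RθA := by
        have h1 := rp_opNorm hp hR (T := (1:ℂ) • RA 1) ⟨1, hone, rfl⟩ (x j0)
        nlinarith [norm_nonneg (((1:ℂ) • RA 1) (x j0))]
      have hRt0 : 0 ≤ RtθA := by
        have h1 := rp_opNorm hp hRt
          (T := (1:ℂ) • RA 1 - ContinuousLinearMap.id ℂ X) ⟨1, hone, rfl⟩ (x j0)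
        nlinarith [norm_nonneg ((((1:ℂ) • RA 1 - ContinuousLinearMap.id ℂ X)) (x j0))]
      have hr0 : 0 ≤ a * RtθA := mul_nonneg ha0 hRt0
      set ν : (Fin N → X) → ℝ := fun y =>
        (∑ ε : Fin N → Bool, ‖∑ j, (if ε j then y j else -(y j))‖ ^ p) ^ (1 / p) with hν
      have hν0 : ∀ y, 0 ≤ ν y := by
        intro y
        simp only [hν]
        exact Real.rpow_nonneg
          (Finset.sum_nonneg fun ε _ => Real.rpow_nonneg (norm_nonneg _) p) _
      have hνR : ∀ y : Fin N → X,
          ν (fun j => (lam j • RA (lam j)) (y j)) ≤ RθA * ν y := by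
        intro y
        simp only [hν]
        exact hR N (fun j => lam j • RA (lam j)) (fun j => ⟨lam j, hlam j, rfl⟩) y
      have hνRt : ∀ y : Fin N → X,
          (∑ ε : Fin N → Bool, ‖∑ j, (if ε j then (lam j • RA (lam j) - ContinuousLinearMap.id ℂ X) (y j)
            else -((lam j • RA (lam j) - ContinuousLinearMap.id ℂ X) (y j)))‖ ^ p) ^ (1 / p)
            ≤ RtθA * ν y := by
        intro y
        simp only [hν]
        exact hRt N (fun j => lam j • RA (lam j) - ContinuousLinearMap.id ℂ X)
          (fun j => ⟨lam j, hlam j, rfl⟩) y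
      have hνS : ∀ y : Fin N → X,
          ν (fun j => S (lam j) (hlam j) (y j)) ≤ (a * RtθA) * ν y := by
        intro y
        have step1 : ∀ ε : Fin N → Bool,
            ‖∑ j, (if ε j then S (lam j) (hlam j) (y j) else -(S (lam j) (hlam j) (y j)))‖
              ≤ a * ‖∑ j, (if ε j then (lam j • RA (lam j) - ContinuousLinearMap.id ℂ X) (y j)
                else -((lam j • RA (lam j) - ContinuousLinearMap.id ℂ X) (y j)))‖ := by
          intro ε
          have hrw : ∀ j : Fin N,
              (if ε j then S (lam j) (hlam j) (y j) else -(S (lam j) (hlam j) (y j)))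
              = B (if ε j then (⟨RA (lam j) (y j), hmem (lam j) (hlam j) (y j)⟩ : D)
                  else -(⟨RA (lam j) (y j), hmem (lam j) (hlam j) (y j)⟩ : D)) := by
            intro j
            cases hε : ε j <;> simp [hε, hSapp (lam j) (hlam j) (y j), map_neg]
          rw [Finset.sum_congr rfl fun j _ => hrw j, ← map_sum]
          refine le_trans (hB _) ?_
          have hrw2 : A (∑ j, (if ε j then (⟨RA (lam j) (y j), hmem (lam j) (hlam j) (y j)⟩ : D)
                else -(⟨RA (lam j) (y j), hmem (lam j) (hlam j) (y j)⟩ : D)))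
              = ∑ j, (if ε j then (lam j • RA (lam j) - ContinuousLinearMap.id ℂ X) (y j)
                else -((lam j • RA (lam j) - ContinuousLinearMap.id ℂ X) (y j))) := by
            rw [map_sum]
            refine Finset.sum_congr rfl fun j _ => ?_
            cases hε : ε j <;>
              simp [hε, map_neg, hAres (lam j) (hlam j) (y j), ContinuousLinearMap.sub_apply,
                ContinuousLinearMap.smul_apply, ContinuousLinearMap.id_apply]
          rw [hrw2]
        simp only [hν]
        calc (∑ ε : Fin N → Bool, ‖∑ j, (if ε j then S (lam j) (hlam j) (y j)
                else -(S (lam j) (hlam j) (y j)))‖ ^ p) ^ (1 / p)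
            ≤ a * (∑ ε : Fin N → Bool, ‖∑ j, (if ε j then (lam j • RA (lam j) - ContinuousLinearMap.id ℂ X) (y j)
                else -((lam j • RA (lam j) - ContinuousLinearMap.id ℂ X) (y j)))‖ ^ p) ^ (1 / p) :=
              rpow_sum_le_core hp a ha0 _ _ (fun ε => norm_nonneg _) (fun ε => norm_nonneg _) step1
          _ ≤ a * (RtθA * ((∑ ε : Fin N → Bool, ‖∑ j, (if ε j then y j else -(y j))‖ ^ p) ^ (1 / p))) := by
              refine mul_le_mul_of_nonneg_left ?_ ha0
              have h := hνRt y
              simpa only [hν] using h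
          _ = (a * RtθA) * ((∑ ε : Fin N → Bool, ‖∑ j, (if ε j then y j else -(y j))‖ ^ p) ^ (1 / p)) := by
              ring
      have hνSn : ∀ (n : ℕ) (y : Fin N → X),
          ν (fun j => ((S (lam j) (hlam j)) ^ n) (y j)) ≤ (a * RtθA) ^ n * ν y := by
        intro n
        induction n with
        | zero =>
          intro y
          have he : (fun j => ((S (lam j) (hlam j)) ^ 0) (y j)) = y := by
            funext j; simp
          rw [he, pow_zero, one_mul]
        | succ n ih =>
          intro y
          have he : (fun j => ((S (lam j) (hlam j)) ^ (n+1)) (y j))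
              = (fun j => ((S (lam j) (hlam j)) ^ n) ((S (lam j) (hlam j)) (y j))) := by
            funext j; rw [pow_succ, ContinuousLinearMap.mul_apply]
          rw [he]
          calc ν (fun j => ((S (lam j) (hlam j)) ^ n) ((S (lam j) (hlam j)) (y j)))
              ≤ (a * RtθA) ^ n * ν (fun j => S (lam j) (hlam j) (y j)) := ih _
            _ ≤ (a * RtθA) ^ n * ((a * RtθA) * ν y) :=
                mul_le_mul_of_nonneg_left (hνS y) (pow_nonneg hr0 n)
            _ = (a * RtθA) ^ (n+1) * ν y := by ring
      have hterm : ∀ n : ℕ,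
          ν (fun j => (lam j • RA (lam j)) (((S (lam j) (hlam j)) ^ n) (x j)))
            ≤ RθA * ((a * RtθA) ^ n * ν x) :=
        fun n => (hνR _).trans (mul_le_mul_of_nonneg_left (hνSn n x) hRθ0)
      have hν_zero : ν (fun _ => (0:X)) = 0 := by
        simp only [hν]
        have h0 : ∀ ε : Fin N → Bool, ‖∑ j : Fin N, (if ε j then (0:X) else -(0:X))‖ ^ p = 0 := by
          intro ε
          simp [Real.zero_rpow hpne]
        rw [Finset.sum_congr rfl fun ε _ => h0 ε, Finset.sum_const_zero]
        exact Real.zero_rpow (one_div_ne_zero hpne)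
      have hνadd : ∀ y z : Fin N → X, ν (fun j => y j + z j) ≤ ν y + ν z := by
        intro y z
        simp only [hν]
        exact nu_add_le hp y z
      have hνsum : ∀ (M : ℕ) (G : ℕ → Fin N → X),
          ν (fun j => ∑ n ∈ Finset.range M, G n j) ≤ ∑ n ∈ Finset.range M, ν (G n) := by
        intro M G
        induction M with
        | zero =>
          simp only [Finset.range_zero, Finset.sum_empty]
          exact le_of_eq hν_zero
        | succ M ih =>
          have he : (fun j => ∑ n ∈ Finset.range (M+1), G n j)
              = (fun j => (∑ n ∈ Finset.range M, G n j) + G M j) := by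
            funext j; rw [Finset.sum_range_succ]
          rw [he, Finset.sum_range_succ]
          exact le_trans (hνadd _ _) (add_le_add_left ih _)
      have hgeom : ∀ M : ℕ, ∑ n ∈ Finset.range M, (a * RtθA) ^ n ≤ (1 - a * RtθA)⁻¹ := by
        intro M
        have hs := summable_geometric_of_lt_one hr0 hsmall
        calc ∑ n ∈ Finset.range M, (a * RtθA) ^ n
            ≤ ∑' n : ℕ, (a * RtθA) ^ n := Summable.sum_le_tsum _ (fun n _ => pow_nonneg hr0 n) hs
          _ = (1 - a * RtθA)⁻¹ := tsum_geometric_of_lt_one hr0 hsmall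
      have hbound : ∀ M : ℕ,
          ν (fun j => ∑ n ∈ Finset.range M, (lam j • RA (lam j)) (((S (lam j) (hlam j)) ^ n) (x j)))
            ≤ RθA / (1 - a * RtθA) * ν x := by
        intro M
        calc ν (fun j => ∑ n ∈ Finset.range M, (lam j • RA (lam j)) (((S (lam j) (hlam j)) ^ n) (x j)))
            ≤ ∑ n ∈ Finset.range M,
                ν (fun j => (lam j • RA (lam j)) (((S (lam j) (hlam j)) ^ n) (x j))) := hνsum M _
          _ ≤ ∑ n ∈ Finset.range M, RθA * ((a * RtθA) ^ n * ν x) :=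
              Finset.sum_le_sum fun n _ => hterm n
          _ = (RθA * ν x) * ∑ n ∈ Finset.range M, (a * RtθA) ^ n := by
              rw [Finset.mul_sum]
              exact Finset.sum_congr rfl fun n _ => by ring
          _ ≤ (RθA * ν x) * (1 - a * RtθA)⁻¹ :=
              mul_le_mul_of_nonneg_left (hgeom M) (mul_nonneg hRθ0 (hν0 x))
          _ = RθA / (1 - a * RtθA) * ν x := by ring
      have hTx : ∀ j, T j (x j) = (lam j • RA (lam j)) (U (lam j) (hlam j) (x j)) := by
        intro j
        rw [hTeq j]
        simp only [dif_pos (hlam j), ContinuousLinearMap.smul_apply,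
          ContinuousLinearMap.comp_apply]
      have hconv : Filter.Tendsto
          (fun M => (fun j => ∑ n ∈ Finset.range M,
            (lam j • RA (lam j)) (((S (lam j) (hlam j)) ^ n) (x j))))
          Filter.atTop (nhds (fun j => T j (x j))) := by
        rw [tendsto_pi_nhds]
        intro j
        have h1 : HasSum (fun n : ℕ => ((S (lam j) (hlam j)) ^ n) (x j))
            (U (lam j) (hlam j) (x j)) := by
          have h2 := (hUsum (lam j) (hlam j)).mapL (ContinuousLinearMap.apply ℂ X (x j))
          simpa [ContinuousLinearMap.apply_apply] using h2
        have h3 := (h1.mapL (lam j • RA (lam j))).tendsto_sum_nat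
        rw [hTx j]
        exact h3
      have hνcont : Continuous ν := by
        rw [hν]
        refine Continuous.rpow_const ?_ (fun _ => Or.inr (by positivity))
        refine continuous_finset_sum _ fun ε _ => ?_
        refine Continuous.rpow_const ?_ (fun _ => Or.inr hp0.le)
        refine Continuous.norm ?_
        refine continuous_finset_sum _ fun j _ => ?_
        cases hε : ε j
        · simp only [hε, Bool.false_eq_true, if_false]
          exact (continuous_apply j).neg
        · simp only [hε, if_true]
          exact continuous_apply j
      have hνconv : Filter.Tendsto
          (fun M => ν (fun j => ∑ n ∈ Finset.range M,
            (lam j • RA (lam j)) (((S (lam j) (hlam j)) ^ n) (x j))))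
          Filter.atTop (nhds (ν (fun j => T j (x j)))) :=
        (hνcont.tendsto _).comp hconv
      have hfinal : ν (fun j => T j (x j)) ≤ RθA / (1 - a * RtθA) * ν x :=
        le_of_tendsto hνconv (Filter.Eventually.of_forall hbound)
      simp only [hν] at hfinal
      exact hfinal
end

section
/- Let 1 < p < ∞. There exists a constant C > 0 (depending only on p) such that for every measurable function f : (0,∞) → [0,∞) the one-sided Hilbert transform (Hf)(x) := ∫₀^∞ f(y)/(x+y) dy satisfies (∫₀^∞ (Hf)(x)^p dx)^{1/p} ≤ C · (∫₀^∞ f(y)^p dy)^{1/p}. In particular, H defines a bounded linear operator on L^p((0,∞)). -/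
open scoped ENNReal
open MeasureTheory Set

private lemma hilbert_meas (c x : ℝ) :
    Measurable fun y : ℝ => ENNReal.ofReal (y ^ c * (x + y)⁻¹) :=
  ((measurable_id.pow measurable_const).mul
    ((measurable_const.add measurable_id).inv)).ennreal_ofReal

private lemma hilbert_scaling (a : ℝ) {x : ℝ} (hx : 0 < x) :
    ∫⁻ y in Ioi (0:ℝ), ENNReal.ofReal (y ^ (-a) * (x + y)⁻¹)
      = ENNReal.ofReal (x ^ (-a)) *
        ∫⁻ t in Ioi (0:ℝ), ENNReal.ofReal (t ^ (-a) * (1 + t)⁻¹) := by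
  have hpre : (fun t : ℝ => x * t) ⁻¹' Ioi 0 = Ioi 0 := by
    ext t
    simp only [mem_preimage, mem_Ioi]
    constructor
    · intro h; by_contra ht; push_neg at ht; nlinarith
    · intro h; positivity
  have hmeasmul : Measurable fun t : ℝ => x * t := measurable_const.mul measurable_id
  have hmap : Measure.map (fun t : ℝ => x * t) (volume.restrict (Ioi 0))
      = ENNReal.ofReal x⁻¹ • volume.restrict (Ioi (0:ℝ)) := by
    rw [← hpre, ← Measure.restrict_map hmeasmul measurableSet_Ioi,
      Real.map_volume_mul_left (ne_of_gt hx), Measure.restrict_smul,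
      abs_of_pos (inv_pos.2 hx), hpre]
  have key : ∫⁻ t in Ioi (0:ℝ), ENNReal.ofReal ((x*t) ^ (-a) * (x + x*t)⁻¹)
      = ENNReal.ofReal x⁻¹ * ∫⁻ y in Ioi (0:ℝ), ENNReal.ofReal (y ^ (-a) * (x + y)⁻¹) := by
    rw [← lintegral_map (hilbert_meas (-a) x) hmeasmul, hmap, lintegral_smul_measure, smul_eq_mul]
  have congr1 : ∫⁻ t in Ioi (0:ℝ), ENNReal.ofReal ((x*t) ^ (-a) * (x + x*t)⁻¹)
      = ENNReal.ofReal (x ^ (-a) * x⁻¹) *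
        ∫⁻ t in Ioi (0:ℝ), ENNReal.ofReal (t ^ (-a) * (1 + t)⁻¹) := by
    rw [← lintegral_const_mul _ (hilbert_meas (-a) 1)]
    refine setLIntegral_congr_fun measurableSet_Ioi (fun t ht => ?_)
    rw [← ENNReal.ofReal_mul (by positivity)]
    congr 1
    rw [Real.mul_rpow hx.le (le_of_lt ht), show x + x*t = x * (1+t) by ring, mul_inv]
    ring
  have hxi : ENNReal.ofReal x * ENNReal.ofReal x⁻¹ = 1 := by
    rw [← ENNReal.ofReal_mul hx.le, mul_inv_cancel₀ (ne_of_gt hx), ENNReal.ofReal_one]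
  calc ∫⁻ y in Ioi (0:ℝ), ENNReal.ofReal (y ^ (-a) * (x + y)⁻¹)
      = (ENNReal.ofReal x * ENNReal.ofReal x⁻¹) *
          ∫⁻ y in Ioi (0:ℝ), ENNReal.ofReal (y ^ (-a) * (x + y)⁻¹) := by rw [hxi, one_mul]
    _ = ENNReal.ofReal x * (∫⁻ t in Ioi (0:ℝ), ENNReal.ofReal ((x*t) ^ (-a) * (x + x*t)⁻¹)) := by
          rw [key, mul_assoc]
    _ = ENNReal.ofReal x * (ENNReal.ofReal (x ^ (-a) * x⁻¹) *
          ∫⁻ t in Ioi (0:ℝ), ENNReal.ofReal (t ^ (-a) * (1 + t)⁻¹)) := by rw [congr1]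
    _ = ENNReal.ofReal (x ^ (-a)) *
          ∫⁻ t in Ioi (0:ℝ), ENNReal.ofReal (t ^ (-a) * (1 + t)⁻¹) := by
          rw [← mul_assoc, ← ENNReal.ofReal_mul hx.le]
          congr 2
          field_simp

private lemma hilbert_I_finite {a : ℝ} (ha0 : 0 < a) (ha1 : a < 1) :
    ∫⁻ t in Ioi (0:ℝ), ENNReal.ofReal (t ^ (-a) * (1 + t)⁻¹) < ∞ := by
  have hsplit : Ioi (0:ℝ) = Ioc (0:ℝ) 1 ∪ Ioi 1 := (Ioc_union_Ioi_eq_Ioi zero_le_one).symm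
  rw [hsplit, lintegral_union measurableSet_Ioi (Ioc_disjoint_Ioi le_rfl)]
  refine ENNReal.add_lt_top.2 ⟨?_, ?_⟩
  · calc ∫⁻ t in Ioc (0:ℝ) 1, ENNReal.ofReal (t ^ (-a) * (1 + t)⁻¹)
        ≤ ∫⁻ t in Ioc (0:ℝ) 1, ENNReal.ofReal (t ^ (-a)) := by
          refine setLIntegral_mono' measurableSet_Ioc fun t ht => ?_
          refine ENNReal.ofReal_le_ofReal ?_
          have h1 : (1 + t)⁻¹ ≤ 1 := by
            rw [inv_le_one_iff₀]; right; linarith [ht.1]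
          have h2 : 0 ≤ t ^ (-a) := Real.rpow_nonneg ht.1.le _
          calc t ^ (-a) * (1 + t)⁻¹ ≤ t ^ (-a) * 1 := mul_le_mul_of_nonneg_left h1 h2
            _ = t ^ (-a) := mul_one _
      _ < ∞ := by
          have : IntegrableOn (fun t : ℝ => t ^ (-a)) (Ioc 0 1) := by
            have := intervalIntegral.intervalIntegrable_rpow' (r := -a) (a := (0:ℝ)) (b := (1:ℝ)) (by linarith)
            rwa [intervalIntegrable_iff_integrableOn_Ioc_of_le zero_le_one] at this
          exact this.setLIntegral_lt_top
  · calc ∫⁻ t in Ioi (1:ℝ), ENNReal.ofReal (t ^ (-a) * (1 + t)⁻¹)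
        ≤ ∫⁻ t in Ioi (1:ℝ), ENNReal.ofReal (t ^ (-a - 1)) := by
          refine setLIntegral_mono' measurableSet_Ioi fun t ht => ?_
          refine ENNReal.ofReal_le_ofReal ?_
          have ht0 : (0:ℝ) < t := lt_trans one_pos ht
          have h1 : (1 + t)⁻¹ ≤ t⁻¹ := by
            apply inv_anti₀ ht0; linarith
          have h2 : 0 ≤ t ^ (-a) := Real.rpow_nonneg ht0.le _
          calc t ^ (-a) * (1 + t)⁻¹ ≤ t ^ (-a) * t⁻¹ := mul_le_mul_of_nonneg_left h1 h2
            _ = t ^ (-a - 1) := by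
                rw [← Real.rpow_neg_one t, ← Real.rpow_add ht0]; ring_nf
      _ < ∞ := (integrableOn_Ioi_rpow_of_lt (by linarith) one_pos).setLIntegral_lt_top

/-- **Boundedness of the one-sided Hilbert transform on `L^p((0,∞))`.**
For `1 < p < ∞` there is a constant `C > 0` (depending only on `p`) such that
for every nonnegative measurable `f` on `(0,∞)`, the function
`(Hf)(x) = ∫₀^∞ f(y)/(x+y) dy` satisfies `‖Hf‖_{L^p} ≤ C ‖f‖_{L^p}`
(both sides possibly infinite). -/
theorem one_sided_hilbert_transform_bounded
    (p : ℝ) (hp : 1 < p) :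
    ∃ C : ℝ, 0 < C ∧
      ∀ f : ℝ → ℝ, Measurable f → (∀ x, 0 ≤ f x) →
        (∫⁻ x in Set.Ioi (0 : ℝ),
            (∫⁻ y in Set.Ioi (0 : ℝ), ENNReal.ofReal (f y / (x + y))) ^ p) ^ (1 / p)
          ≤ ENNReal.ofReal C *
            (∫⁻ y in Set.Ioi (0 : ℝ), ENNReal.ofReal (f y) ^ p) ^ (1 / p) := by
  obtain ⟨q, hpq⟩ : ∃ q, p.HolderConjugate q := ⟨_, Real.HolderConjugate.conjExponent hp⟩
  have hp0 : (0:ℝ) < p := hpq.pos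
  have hq0 : (0:ℝ) < q := hpq.symm.pos
  have hinv : p⁻¹ + q⁻¹ = 1 := hpq.inv_add_inv_eq_one
  have hip : (0:ℝ) < 1/p := by positivity
  have hiq : (0:ℝ) < 1/q := by positivity
  have hip1 : 1/p < 1 := by rw [one_div]; nlinarith [hpq.symm.inv_pos]
  have hiq1 : 1/q < 1 := by rw [one_div]; nlinarith [hpq.inv_pos]
  set I₁ := ∫⁻ t in Ioi (0:ℝ), ENNReal.ofReal (t ^ (-(1/p)) * (1 + t)⁻¹) with hI₁
  set I₂ := ∫⁻ t in Ioi (0:ℝ), ENNReal.ofReal (t ^ (-(1/q)) * (1 + t)⁻¹) with hI₂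
  have hI₁fin : I₁ < ∞ := hilbert_I_finite hip hip1
  have hI₂fin : I₂ < ∞ := hilbert_I_finite hiq hiq1
  set K := I₁ ^ (p/q) * I₂ with hK
  have hKfin : K ≠ ∞ :=
    ENNReal.mul_ne_top (ENNReal.rpow_ne_top_of_nonneg (by positivity) hI₁fin.ne) hI₂fin.ne
  have hKp : K ^ (1/p) ≠ ∞ := ENNReal.rpow_ne_top_of_nonneg (by positivity) hKfin
  refine ⟨(K ^ (1/p)).toReal + 1, by positivity, ?_⟩
  intro f hf hf0
  set b := 1/(p*q) with hb
  have hbq : b * q = 1/p := by rw [hb]; field_simp [hp0.ne', hq0.ne']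
  have hbp : b * p = 1/q := by rw [hb]; field_simp [hp0.ne', hq0.ne']
  set S := ∫⁻ y in Ioi (0:ℝ), ENNReal.ofReal (f y) ^ p with hS
  set W : ℝ → ℝ≥0∞ := fun x =>
    ∫⁻ y in Ioi (0:ℝ), ENNReal.ofReal (y ^ (1/q) * (x + y)⁻¹) * ENNReal.ofReal (f y) ^ p
    with hW
  -- Step A : pointwise Hölder bound
  have stepA : ∀ x ∈ Ioi (0:ℝ),
      (∫⁻ y in Ioi (0:ℝ), ENNReal.ofReal (f y / (x + y))) ^ p
        ≤ I₁ ^ (p/q) * (ENNReal.ofReal (x ^ (-(1/q))) * W x) := by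
    intro x hx
    have hx0 : (0:ℝ) < x := hx
    set A : ℝ → ℝ≥0∞ := fun y =>
      ENNReal.ofReal (y ^ (-b)) * ENNReal.ofReal ((x + y)⁻¹) ^ (1/q) with hA
    set B : ℝ → ℝ≥0∞ := fun y =>
      ENNReal.ofReal (y ^ b * f y) * ENNReal.ofReal ((x + y)⁻¹) ^ (1/p) with hB
    have hAm : Measurable A :=
      ((measurable_id.pow measurable_const).ennreal_ofReal).mul
        (((measurable_const.add measurable_id).inv.ennreal_ofReal).pow measurable_const)
    have hBm : Measurable B :=
      (((measurable_id.pow measurable_const).mul hf).ennreal_ofReal).mul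
        (((measurable_const.add measurable_id).inv.ennreal_ofReal).pow measurable_const)
    have hdec : ∫⁻ y in Ioi (0:ℝ), ENNReal.ofReal (f y / (x + y))
        = ∫⁻ y in Ioi (0:ℝ), (A * B) y := by
      refine setLIntegral_congr_fun measurableSet_Ioi (fun y hy => ?_)
      have hy0 : (0:ℝ) < y := hy
      have hxy0 : (0:ℝ) < x + y := by linarith
      have hker : ENNReal.ofReal ((x + y)⁻¹) ^ (1/q) * ENNReal.ofReal ((x + y)⁻¹) ^ (1/p)
          = ENNReal.ofReal ((x + y)⁻¹) := by
        rw [← ENNReal.rpow_add _ _ (ENNReal.ofReal_pos.2 (inv_pos.2 hxy0)).ne'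
            ENNReal.ofReal_ne_top,
          show 1/q + 1/p = 1 by rw [one_div, one_div]; linarith, ENNReal.rpow_one]
      calc ENNReal.ofReal (f y / (x + y))
          = ENNReal.ofReal (y ^ (-b) * (y ^ b * f y)) * ENNReal.ofReal ((x + y)⁻¹) := by
            rw [← ENNReal.ofReal_mul (mul_nonneg (Real.rpow_nonneg hy0.le _)
              (mul_nonneg (Real.rpow_nonneg hy0.le _) (hf0 y)))]
            congr 1
            rw [← mul_assoc, ← Real.rpow_add hy0, neg_add_cancel, Real.rpow_zero, one_mul,
              div_eq_mul_inv]
        _ = (A * B) y := by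
            simp only [Pi.mul_apply, hA, hB]
            rw [ENNReal.ofReal_mul (Real.rpow_nonneg hy0.le _), mul_mul_mul_comm, hker]
    have holder := ENNReal.lintegral_mul_le_Lp_mul_Lq (volume.restrict (Ioi (0:ℝ)))
      hpq.symm hAm.aemeasurable hBm.aemeasurable
    have hAq : ∫⁻ y in Ioi (0:ℝ), A y ^ q = ENNReal.ofReal (x ^ (-(1/p))) * I₁ := by
      rw [← hilbert_scaling (1/p) hx0]
      refine setLIntegral_congr_fun measurableSet_Ioi (fun y hy => ?_)
      have hy0 : (0:ℝ) < y := hy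
      simp only [hA]
      rw [ENNReal.mul_rpow_of_nonneg _ _ hq0.le,
        ENNReal.ofReal_rpow_of_pos (Real.rpow_pos_of_pos hy0 _),
        ← ENNReal.rpow_mul, one_div, inv_mul_cancel₀ hq0.ne', ENNReal.rpow_one,
        ← Real.rpow_mul hy0.le, neg_mul, hbq,
        ← ENNReal.ofReal_mul (Real.rpow_nonneg hy0.le _)]
    have hBp : ∫⁻ y in Ioi (0:ℝ), B y ^ p = W x := by
      simp only [hW]
      refine setLIntegral_congr_fun measurableSet_Ioi (fun y hy => ?_)
      have hy0 : (0:ℝ) < y := hy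
      simp only [hB]
      rw [ENNReal.mul_rpow_of_nonneg _ _ hp0.le,
        ← ENNReal.rpow_mul, one_div, inv_mul_cancel₀ hp0.ne', ENNReal.rpow_one,
        ENNReal.ofReal_rpow_of_nonneg (mul_nonneg (Real.rpow_nonneg hy0.le _) (hf0 y)) hp0.le,
        Real.mul_rpow (Real.rpow_nonneg hy0.le _) (hf0 y),
        ← Real.rpow_mul hy0.le, hbp,
        ENNReal.ofReal_mul (Real.rpow_nonneg hy0.le _),
        ENNReal.ofReal_mul (Real.rpow_nonneg hy0.le _),
        ← ENNReal.ofReal_rpow_of_nonneg (hf0 y) hp0.le]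
      ring
    have hex : (-(1/p)) * (p/q) = -(1/q) := by field_simp
    calc (∫⁻ y in Ioi (0:ℝ), ENNReal.ofReal (f y / (x + y))) ^ p
        = (∫⁻ y in Ioi (0:ℝ), (A * B) y) ^ p := by rw [hdec]
      _ ≤ ((∫⁻ y in Ioi (0:ℝ), A y ^ q) ^ (1/q) * (∫⁻ y in Ioi (0:ℝ), B y ^ p) ^ (1/p)) ^ p :=
          ENNReal.rpow_le_rpow holder hp0.le
      _ = (∫⁻ y in Ioi (0:ℝ), A y ^ q) ^ (p/q) * ∫⁻ y in Ioi (0:ℝ), B y ^ p := by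
          rw [ENNReal.mul_rpow_of_nonneg _ _ hp0.le, ← ENNReal.rpow_mul, ← ENNReal.rpow_mul,
            show 1/q * p = p/q by ring, show 1/p * p = 1 by field_simp, ENNReal.rpow_one]
      _ = (ENNReal.ofReal (x ^ (-(1/p))) * I₁) ^ (p/q) * W x := by rw [hAq, hBp]
      _ = I₁ ^ (p/q) * (ENNReal.ofReal (x ^ (-(1/q))) * W x) := by
          rw [ENNReal.mul_rpow_of_nonneg _ _ (by positivity : (0:ℝ) ≤ p/q),
            ENNReal.ofReal_rpow_of_pos (Real.rpow_pos_of_pos hx0 _),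
            ← Real.rpow_mul hx0.le, hex]
          ring
  -- Step B : integrate, swap, and use scaling again
  have measF : Measurable fun z : ℝ × ℝ =>
      ENNReal.ofReal (z.1 ^ (-(1/q))) *
        (ENNReal.ofReal (z.2 ^ (1/q) * (z.1 + z.2)⁻¹) * ENNReal.ofReal (f z.2) ^ p) :=
    ((measurable_fst.pow measurable_const).ennreal_ofReal).mul
      ((((measurable_snd.pow measurable_const).mul
          ((measurable_fst.add measurable_snd).inv)).ennreal_ofReal).mul
        (((hf.comp measurable_snd).ennreal_ofReal).pow measurable_const))
  have hT : ∫⁻ x in Ioi (0:ℝ), ENNReal.ofReal (x ^ (-(1/q))) * W x = I₂ * S := by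
    have h1 : ∀ x : ℝ, ENNReal.ofReal (x ^ (-(1/q))) * W x
        = ∫⁻ y in Ioi (0:ℝ), ENNReal.ofReal (x ^ (-(1/q))) *
            (ENNReal.ofReal (y ^ (1/q) * (x + y)⁻¹) * ENNReal.ofReal (f y) ^ p) := fun x =>
      (lintegral_const_mul _ ((hilbert_meas (1/q) x).mul
        ((hf.ennreal_ofReal).pow measurable_const))).symm
    rw [lintegral_congr h1, lintegral_lintegral_swap measF.aemeasurable]
    have h2 : ∀ y ∈ Ioi (0:ℝ),
        (∫⁻ x in Ioi (0:ℝ), ENNReal.ofReal (x ^ (-(1/q))) *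
            (ENNReal.ofReal (y ^ (1/q) * (x + y)⁻¹) * ENNReal.ofReal (f y) ^ p))
          = I₂ * ENNReal.ofReal (f y) ^ p := by
      intro y hy
      have hy0 : (0:ℝ) < y := hy
      have e1 : ∀ x ∈ Ioi (0:ℝ), ENNReal.ofReal (x ^ (-(1/q))) *
            (ENNReal.ofReal (y ^ (1/q) * (x + y)⁻¹) * ENNReal.ofReal (f y) ^ p)
          = (ENNReal.ofReal (y ^ (1/q)) * ENNReal.ofReal (f y) ^ p) *
              ENNReal.ofReal (x ^ (-(1/q)) * (y + x)⁻¹) := by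
        intro x hx
        have hx0 : (0:ℝ) < x := hx
        rw [ENNReal.ofReal_mul (Real.rpow_nonneg hy0.le _),
          ENNReal.ofReal_mul (Real.rpow_nonneg hx0.le _), add_comm y x]
        ring
      have huv : ENNReal.ofReal (y ^ (1/q)) * ENNReal.ofReal (y ^ (-(1/q))) = 1 := by
        rw [← ENNReal.ofReal_mul (Real.rpow_nonneg hy0.le _), ← Real.rpow_add hy0]
        simp
      rw [setLIntegral_congr_fun measurableSet_Ioi e1,
        lintegral_const_mul' _ _ (ENNReal.mul_ne_top ENNReal.ofReal_ne_top
          (ENNReal.rpow_ne_top_of_nonneg hp0.le ENNReal.ofReal_ne_top)),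
        hilbert_scaling (1/q) hy0, ← hI₂,
        show ENNReal.ofReal (y ^ (1/q)) * ENNReal.ofReal (f y) ^ p *
            (ENNReal.ofReal (y ^ (-(1/q))) * I₂)
          = ENNReal.ofReal (y ^ (1/q)) * ENNReal.ofReal (y ^ (-(1/q))) *
            (ENNReal.ofReal (f y) ^ p * I₂) from by ring, huv, one_mul, mul_comm]
    rw [setLIntegral_congr_fun measurableSet_Ioi h2,
      lintegral_const_mul _ ((hf.ennreal_ofReal).pow measurable_const)]
  -- Final assembly
  have main : (∫⁻ x in Ioi (0:ℝ),
      (∫⁻ y in Ioi (0:ℝ), ENNReal.ofReal (f y / (x + y))) ^ p) ≤ K * S := by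
    calc ∫⁻ x in Ioi (0:ℝ), (∫⁻ y in Ioi (0:ℝ), ENNReal.ofReal (f y / (x + y))) ^ p
        ≤ ∫⁻ x in Ioi (0:ℝ), I₁ ^ (p/q) * (ENNReal.ofReal (x ^ (-(1/q))) * W x) :=
          setLIntegral_mono' measurableSet_Ioi stepA
      _ = I₁ ^ (p/q) * ∫⁻ x in Ioi (0:ℝ), ENNReal.ofReal (x ^ (-(1/q))) * W x :=
          lintegral_const_mul' _ _ (ENNReal.rpow_ne_top_of_nonneg (by positivity) hI₁fin.ne)
      _ = I₁ ^ (p/q) * (I₂ * S) := by rw [hT]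
      _ = K * S := by rw [hK, mul_assoc]
  calc (∫⁻ x in Ioi (0:ℝ),
      (∫⁻ y in Ioi (0:ℝ), ENNReal.ofReal (f y / (x + y))) ^ p) ^ (1/p)
      ≤ (K * S) ^ (1/p) := ENNReal.rpow_le_rpow main (by positivity)
    _ = K ^ (1/p) * S ^ (1/p) := ENNReal.mul_rpow_of_nonneg _ _ (by positivity)
    _ ≤ ENNReal.ofReal ((K ^ (1/p)).toReal + 1) * S ^ (1/p) := by
        refine mul_le_mul_left ?_ _
        conv_lhs => rw [← ENNReal.ofReal_toReal hKp]
        exact ENNReal.ofReal_le_ofReal (by linarith)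
end
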